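/- arXiv:1203.2390 — 7 statements merged into one kernel-verified Lean document; each statement's English description precedes it below -/
import Mathlib

section
/- Let A be an n×n complex matrix and suppose the Hermitian part H = (A* + A)/2 of A is positive definite. Then for any vector r ≠ 0, the real quadratic α ↦ ‖r - αAr‖² attains a minimum value ‖r‖²(1 - (r*Hr / (‖r‖‖Ar‖))²), and hence there exists α with ‖r - αAr‖ ≤ ρ‖r‖ where ρ = sqrt(1 - (λmin(H)/‖A‖)²) < 1. -/
open Matrix
open scoped ComplexOrder

noncomputable def opNorm {n : ℕ} (A : Matrix (Fin n) (Fin n) ℂ) : ℝ :=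
  ‖Matrix.toEuclideanCLM (𝕜 := ℂ) A‖

noncomputable def mulVecE {n : ℕ} (A : Matrix (Fin n) (Fin n) ℂ)
    (v : EuclideanSpace ℂ (Fin n)) : EuclideanSpace ℂ (Fin n) :=
  WithLp.toLp 2 (A.mulVec v)

private lemma rayleigh_min {n : ℕ} (hn : 0 < n) {H : Matrix (Fin n) (Fin n) ℂ}
    (hA : H.IsHermitian) (x : EuclideanSpace ℂ (Fin n)) :
    (⨅ i, hA.eigenvalues i) * ‖x‖ ^ 2 ≤ (star (x : Fin n → ℂ) ⬝ᵥ H.mulVec x).re := by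
  haveI : Nonempty (Fin n) := ⟨⟨0, hn⟩⟩
  have hdot : (star (x : Fin n → ℂ) ⬝ᵥ H.mulVec x) = (inner ℂ x (mulVecE H x) : ℂ) := by rw [EuclideanSpace.inner_eq_star_dotProduct, dotProduct_comm]; rfl
  set b := hA.eigenvectorBasis with hbdef
  set μ := hA.eigenvalues with hμdef
  have hsym := (Matrix.isHermitian_iff_isSymmetric.1 hA)
  have hlin : ∀ i, Matrix.toEuclideanLin H (b i) = (μ i : ℂ) • b i := by
    intro i
    have h1 : H *ᵥ ⇑(b i) = μ i • ⇑(b i) := hA.mulVec_eigenvectorBasis i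
    ext j
    have := congrFun h1 j
    simpa [Complex.real_smul] using this
  have hb : ∀ i, (inner ℂ (b i) (mulVecE H x) : ℂ) = (μ i : ℂ) * inner ℂ (b i) x := by
    intro i
    have : mulVecE H x = Matrix.toEuclideanLin H x := rfl
    rw [this, ← hsym (b i) x, hlin i, inner_smul_left]
    simp
  have key : (inner ℂ x (mulVecE H x) : ℂ)
      = ∑ i, (μ i : ℂ) * (inner ℂ x (b i) * inner ℂ (b i) x) := by
    rw [← b.sum_inner_mul_inner x (mulVecE H x)]
    refine Finset.sum_congr rfl fun i _ => ?_
    rw [hb i]; ring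
  have hxbi : ∀ i, (inner ℂ x (b i) : ℂ) * inner ℂ (b i) x
      = (Complex.normSq (inner ℂ (b i) x : ℂ) : ℂ) := by
    intro i
    rw [← inner_conj_symm (b i) x, Complex.normSq_conj, Complex.mul_conj]
  have pars : ∑ i, Complex.normSq (inner ℂ (b i) x : ℂ) = ‖x‖ ^ 2 := by
    have h := b.sum_inner_mul_inner x x
    have h2 := congrArg Complex.re h
    rw [Complex.re_sum] at h2
    simp only [hxbi, Complex.ofReal_re] at h2
    rw [h2, ← inner_self_eq_norm_sq (𝕜 := ℂ) x]
    rfl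
  have hre : (star (x : Fin n → ℂ) ⬝ᵥ H.mulVec x).re
      = ∑ i, μ i * Complex.normSq (inner ℂ (b i) x : ℂ) := by
    rw [hdot, key, Complex.re_sum]
    refine Finset.sum_congr rfl fun i _ => ?_
    rw [hxbi i, ← Complex.ofReal_mul, Complex.ofReal_re]
  rw [hre, ← pars, Finset.mul_sum]
  refine Finset.sum_le_sum fun i _ => ?_
  exact mul_le_mul_of_nonneg_right (ciInf_le (Finite.bddBelow_range _) i)
    (Complex.normSq_nonneg _)

set_option maxHeartbeats 1000000 in
theorem stmt0 {n : ℕ} (hn : 0 < n) (A : Matrix (Fin n) (Fin n) ℂ)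
    (H : Matrix (Fin n) (Fin n) ℂ) (hHdef : H = (1 / 2 : ℂ) • (Aᴴ + A))
    (hH : H.PosDef) (r : EuclideanSpace ℂ (Fin n)) (hr : r ≠ 0) :
    (∃ α : ℝ,
      ‖r - (α : ℂ) • mulVecE A r‖ ^ 2
        = ‖r‖ ^ 2 * (1 - ((star (r : Fin n → ℂ) ⬝ᵥ H.mulVec r).re
            / (‖r‖ * ‖mulVecE A r‖)) ^ 2)
      ∧ ∀ β : ℝ,
        ‖r‖ ^ 2 * (1 - ((star (r : Fin n → ℂ) ⬝ᵥ H.mulVec r).re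
            / (‖r‖ * ‖mulVecE A r‖)) ^ 2)
          ≤ ‖r - (β : ℂ) • mulVecE A r‖ ^ 2)
    ∧ Real.sqrt (1 - ((⨅ i, hH.1.eigenvalues i) / opNorm A) ^ 2) < 1
    ∧ ∃ α : ℝ, ‖r - (α : ℂ) • mulVecE A r‖
        ≤ Real.sqrt (1 - ((⨅ i, hH.1.eigenvalues i) / opNorm A) ^ 2) * ‖r‖ := by
  haveI : Nonempty (Fin n) := ⟨⟨0, hn⟩⟩
  set s := mulVecE A r with hs
  set c : ℝ := (star (r : Fin n → ℂ) ⬝ᵥ H.mulVec r).re with hc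
  have hadj : (inner ℂ r (mulVecE Aᴴ r) : ℂ) = inner ℂ s r := by
    have h1 : mulVecE Aᴴ r = Matrix.toEuclideanLin Aᴴ r := rfl
    have h2 : s = Matrix.toEuclideanLin A r := rfl
    rw [h1, Matrix.toEuclideanLin_conjTranspose_eq_adjoint, LinearMap.adjoint_inner_right, h2]
  have e1 : (inner ℂ r s : ℂ) = star (r : Fin n → ℂ) ⬝ᵥ (A *ᵥ (r : Fin n → ℂ)) := by rw [EuclideanSpace.inner_eq_star_dotProduct, dotProduct_comm]; rfl
  have e2 : (inner ℂ r (mulVecE Aᴴ r) : ℂ)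
      = star (r : Fin n → ℂ) ⬝ᵥ (Aᴴ *ᵥ (r : Fin n → ℂ)) := by rw [EuclideanSpace.inner_eq_star_dotProduct, dotProduct_comm]; rfl
  have hco : (star (r : Fin n → ℂ) ⬝ᵥ H.mulVec r)
      = (1 / 2 : ℂ) * ((inner ℂ s r : ℂ) + inner ℂ r s) := by
    show (star (r : Fin n → ℂ) ⬝ᵥ H *ᵥ (r : Fin n → ℂ)) = _
    rw [hHdef, Matrix.smul_mulVec, Matrix.add_mulVec, dotProduct_smul,
      dotProduct_add, ← e1, ← e2, hadj, smul_eq_mul]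
  have hcre : c = (inner ℂ r s : ℂ).re := by
    rw [hc, hco, ← inner_conj_symm r s]
    set z := (inner ℂ r s : ℂ)
    simp [Complex.add_re, Complex.mul_re, Complex.add_im, Complex.conj_re, Complex.conj_im,
      Complex.mul_im, -inner_conj_symm]
    ring
  have hr' : (r : Fin n → ℂ) ≠ 0 := by
    intro h
    exact hr (by ext i; exact congrFun h i)
  have hcpos : 0 < c := by
    have h := (Matrix.posDef_iff_dotProduct_mulVec.1 hH).2 hr'
    rw [Complex.lt_def] at h
    simpa [hc] using h.1
  have hrpos : 0 < ‖r‖ := norm_pos_iff.2 hr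
  have hspos : 0 < ‖s‖ := by
    rcases eq_or_ne s 0 with h | h
    · exfalso
      rw [hcre, h] at hcpos
      simp at hcpos
    · exact norm_pos_iff.2 h
  have hquad : ∀ β : ℝ, ‖r - (β : ℂ) • s‖ ^ 2
      = ‖r‖ ^ 2 - 2 * β * c + β ^ 2 * ‖s‖ ^ 2 := by
    intro β
    rw [norm_sub_sq (𝕜 := ℂ), inner_smul_right, norm_smul]
    rw [hcre]
    simp only [RCLike.re_to_complex, Complex.mul_re, Complex.ofReal_re, Complex.ofReal_im,
      Complex.norm_real, Real.norm_eq_abs]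
    ring_nf
    simp [sq_abs]
  -- the minimizer
  set α₀ : ℝ := c / ‖s‖ ^ 2 with hα₀
  have hmin : ‖r - (α₀ : ℂ) • s‖ ^ 2
      = ‖r‖ ^ 2 * (1 - (c / (‖r‖ * ‖s‖)) ^ 2) := by
    rw [hquad α₀, hα₀]
    field_simp
    ring
  have hminle : ∀ β : ℝ, ‖r‖ ^ 2 * (1 - (c / (‖r‖ * ‖s‖)) ^ 2)
      ≤ ‖r - (β : ℂ) • s‖ ^ 2 := by
    intro β
    rw [hquad β]
    have h1 : ‖r‖ ^ 2 * (1 - (c / (‖r‖ * ‖s‖)) ^ 2) = ‖r‖ ^ 2 - c ^ 2 / ‖s‖ ^ 2 := by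
      field_simp
    rw [h1]
    have h3 : 2 * β * c - β ^ 2 * ‖s‖ ^ 2 ≤ c ^ 2 / ‖s‖ ^ 2 := by
      rw [le_div_iff₀ (pow_pos hspos 2)]
      nlinarith [sq_nonneg (c - β * ‖s‖ ^ 2)]
    linarith
  -- spectral quantities
  set lm := ⨅ i, hH.1.eigenvalues i with hlm
  have hlmpos : 0 < lm := by
    obtain ⟨i0, hi0⟩ := Finite.exists_min hH.1.eigenvalues
    have h1 : hH.1.eigenvalues i0 ≤ lm := le_ciInf hi0
    exact lt_of_lt_of_le (hH.eigenvalues_pos i0) h1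
  have hray : lm * ‖r‖ ^ 2 ≤ c := rayleigh_min hn hH.1 r
  have hCS : c ≤ ‖r‖ * ‖s‖ := by
    rw [hcre]
    exact re_inner_le_norm (𝕜 := ℂ) r s
  have hsop : ‖s‖ ≤ opNorm A * ‖r‖ := by
    have h1 : s = Matrix.toEuclideanCLM (𝕜 := ℂ) A r := by
      have h := congrArg (fun T : EuclideanSpace ℂ (Fin n) →ₗ[ℂ] EuclideanSpace ℂ (Fin n)
        => T r) (Matrix.coe_toEuclideanCLM_eq_toEuclideanLin (A := A))
      exact h.symm
    rw [h1]
    exact (Matrix.toEuclideanCLM (𝕜 := ℂ) A).le_opNorm r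
  have hlmop : lm ≤ opNorm A := by
    have h4 := mul_le_mul_of_nonneg_left hsop hrpos.le
    have h5 : lm * ‖r‖ ^ 2 ≤ opNorm A * ‖r‖ ^ 2 := by nlinarith
    exact le_of_mul_le_mul_right h5 (pow_pos hrpos 2)
  have hoppos : 0 < opNorm A := lt_of_lt_of_le hlmpos hlmop
  have ht0 : 0 < lm / opNorm A := div_pos hlmpos hoppos
  have ht1 : lm / opNorm A ≤ 1 := by
    rw [div_le_one hoppos]; exact hlmop
  have hnn : 0 ≤ 1 - (lm / opNorm A) ^ 2 := by nlinarith
  refine ⟨⟨α₀, hmin, hminle⟩, ?_, ?_⟩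
  · have hlt : 1 - (lm / opNorm A) ^ 2 < 1 := by nlinarith
    have h2 := Real.sqrt_lt_sqrt hnn hlt
    rwa [Real.sqrt_one] at h2
  · refine ⟨α₀, ?_⟩
    have hratio : lm / opNorm A ≤ c / (‖r‖ * ‖s‖) := by
      rw [div_le_div_iff₀ hoppos (mul_pos hrpos hspos)]
      nlinarith
    have hsq : (lm / opNorm A) ^ 2 ≤ (c / (‖r‖ * ‖s‖)) ^ 2 := by
      nlinarith
    have hbound : ‖r - (α₀ : ℂ) • s‖ ^ 2
        ≤ (Real.sqrt (1 - (lm / opNorm A) ^ 2) * ‖r‖) ^ 2 := by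
      rw [hmin, mul_pow, Real.sq_sqrt hnn]
      nlinarith
    exact le_of_pow_le_pow_left₀ two_ne_zero (mul_nonneg (Real.sqrt_nonneg _) (norm_nonneg _)) hbound
end

section
/- Let A be an n×n complex matrix and P a polynomial with P(0) = 0 such that the Hermitian part H of P(A) is positive definite. Then for every vector r ≠ 0 there exists a real scalar α such that ‖(I - αP(A))r‖ ≤ ρ‖r‖ where ρ = sqrt(1 - (min|λ(H)| / ‖P(A)‖)²) < 1. -/
open Matrix
open scoped ComplexOrder

open scoped InnerProductSpace

lemma repr_mulVec {n : ℕ} (H : Matrix (Fin n) (Fin n) ℂ) (hH : H.IsHermitian)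
    (x : EuclideanSpace ℂ (Fin n)) (i : Fin n) :
    (hH.eigenvectorBasis).repr (WithLp.toLp 2 (H.mulVec x : Fin n → ℂ) : EuclideanSpace ℂ (Fin n)) i
      = (hH.eigenvalues i : ℂ) * (hH.eigenvectorBasis).repr x i := by
  have hsym := (isHermitian_iff_isSymmetric.1 hH)
  rw [OrthonormalBasis.repr_apply_apply, OrthonormalBasis.repr_apply_apply]
  have hx : (WithLp.toLp 2 (H.mulVec x : Fin n → ℂ) : EuclideanSpace ℂ (Fin n)) = Matrix.toEuclideanLin H x := rfl
  have hTb : toEuclideanLin H (hH.eigenvectorBasis i)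
      = (hH.eigenvalues i : ℂ) • hH.eigenvectorBasis i := by
    apply PiLp.ext; intro j
    have := congrFun (hH.mulVec_eigenvectorBasis i) j
    simpa [Matrix.toEuclideanLin_apply, Complex.real_smul] using this
  rw [hx, ← hsym (hH.eigenvectorBasis i) x, hTb, inner_smul_left]
  simp

lemma rayleigh_lb {n : ℕ} (hn : 0 < n) (H : Matrix (Fin n) (Fin n) ℂ) (hH : H.PosDef)
    (x : EuclideanSpace ℂ (Fin n)) :
    (⨅ i, |hH.1.eigenvalues i|) * ‖x‖ ^ 2
      ≤ Complex.re (inner ℂ x (WithLp.toLp 2 (H.mulVec x : Fin n → ℂ) : EuclideanSpace ℂ (Fin n)) : ℂ) := by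
  haveI : Nonempty (Fin n) := ⟨⟨0, hn⟩⟩
  set b := hH.1.eigenvectorBasis with hb
  set c := b.repr x with hc
  have h1 : (inner ℂ x (WithLp.toLp 2 (H.mulVec x : Fin n → ℂ) : EuclideanSpace ℂ (Fin n)) : ℂ)
      = ∑ i, (starRingEnd ℂ) (c i) * ((hH.1.eigenvalues i : ℂ) * c i) := by
    rw [← b.repr.inner_map_map x (WithLp.toLp 2 (H.mulVec x : Fin n → ℂ) : EuclideanSpace ℂ (Fin n))]
    rw [PiLp.inner_apply]
    refine Finset.sum_congr rfl fun i _ => ?_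
    rw [repr_mulVec H hH.1 x i]
    simp [RCLike.inner_apply, c, b]
    ring
  have h2 : ‖x‖ ^ 2 = ∑ i, Complex.normSq (c i) := by
    have : (inner ℂ x x : ℂ) = ∑ i, (starRingEnd ℂ) (c i) * c i := by
      rw [← b.repr.inner_map_map x x, PiLp.inner_apply]
      simp [RCLike.inner_apply, c, b, Complex.conj_mul']
    have h3 := congrArg Complex.re this
    rw [← inner_self_eq_norm_sq (𝕜 := ℂ) x]
    refine h3.trans ?_
    rw [Complex.re_sum]
    refine Finset.sum_congr rfl fun i _ => ?_
    rw [mul_comm, Complex.mul_conj]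
    simp
  rw [h1, h2, Complex.re_sum, Finset.mul_sum]
  refine Finset.sum_le_sum fun i _ => ?_
  have hlow : (⨅ j, |hH.1.eigenvalues j|) ≤ hH.1.eigenvalues i := by
    refine le_trans (ciInf_le (Finite.bddBelow_range _) i) ?_
    exact (abs_of_pos (hH.eigenvalues_pos i)).le
  have : ((starRingEnd ℂ) (c i) * ((hH.1.eigenvalues i : ℂ) * c i)).re
      = hH.1.eigenvalues i * Complex.normSq (c i) := by
    rw [mul_left_comm, ← Complex.normSq_eq_conj_mul_self]
    simp [Complex.ofReal_mul]
  rw [this]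
  exact mul_le_mul_of_nonneg_right hlow (Complex.normSq_nonneg _)

lemma herm_re {n : ℕ} (B : Matrix (Fin n) (Fin n) ℂ) (x : EuclideanSpace ℂ (Fin n)) :
    Complex.re ((inner ℂ x (WithLp.toLp 2 ((((1/2:ℂ) • (Bᴴ + B)).mulVec x : Fin n → ℂ)) : EuclideanSpace ℂ (Fin n))) : ℂ)
      = Complex.re ((inner ℂ x (WithLp.toLp 2 (B.mulVec x : Fin n → ℂ) : EuclideanSpace ℂ (Fin n))) : ℂ) := by
  rw [EuclideanSpace.inner_eq_star_dotProduct, EuclideanSpace.inner_eq_star_dotProduct]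
  set v : Fin n → ℂ := WithLp.ofLp x with hv
  have hveq : ∀ y : Fin n → ℂ, WithLp.ofLp (WithLp.toLp 2 y) = y :=
    fun y => rfl
  rw [hveq, hveq, dotProduct_comm, dotProduct_comm (B *ᵥ v)]
  change Complex.re ((star v) ⬝ᵥ ((1/2:ℂ) • (Bᴴ + B)) *ᵥ v) = Complex.re ((star v) ⬝ᵥ B *ᵥ v)
  rw [Matrix.smul_mulVec, Matrix.add_mulVec, dotProduct_smul,
    dotProduct_add]
  have h1 : star v ⬝ᵥ Bᴴ *ᵥ v = star (star v ⬝ᵥ B *ᵥ v) := by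
    rw [Matrix.dotProduct_mulVec, ← Matrix.star_mulVec, Matrix.star_dotProduct]
  rw [h1]
  set z := star v ⬝ᵥ B *ᵥ v
  simp [Complex.add_re, Complex.conj_re]
  ring

theorem stmt1 {n : ℕ} (hn : 0 < n) (A : Matrix (Fin n) (Fin n) ℂ)
    (P : Polynomial ℂ) (hP0 : P.coeff 0 = 0)
    (H : Matrix (Fin n) (Fin n) ℂ)
    (hHdef : H = (1 / 2 : ℂ) • ((Polynomial.aeval A P)ᴴ + Polynomial.aeval A P))
    (hH : H.PosDef) :
    Real.sqrt (1 - ((⨅ i, |hH.1.eigenvalues i|) / opNorm (Polynomial.aeval A P)) ^ 2) < 1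
    ∧ ∀ r : EuclideanSpace ℂ (Fin n), r ≠ 0 →
        ∃ α : ℝ, ‖mulVecE (1 - (α : ℂ) • Polynomial.aeval A P) r‖
          ≤ Real.sqrt (1 - ((⨅ i, |hH.1.eigenvalues i|)
              / opNorm (Polynomial.aeval A P)) ^ 2) * ‖r‖ := by
  haveI : Nonempty (Fin n) := ⟨⟨0, hn⟩⟩
  set B := Polynomial.aeval A P with hB
  set μ := ⨅ i, |hH.1.eigenvalues i| with hμdef
  set N := opNorm B with hNdef
  -- basic facts
  have hμpos : 0 < μ := by
    obtain ⟨j, hj⟩ := exists_eq_ciInf_of_finite (f := fun i => |hH.1.eigenvalues i|)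
    rw [hμdef, ← hj]
    exact abs_pos.mpr (ne_of_gt (hH.eigenvalues_pos j))
  have hray : ∀ x : EuclideanSpace ℂ (Fin n),
      μ * ‖x‖ ^ 2 ≤ Complex.re ((inner ℂ x (mulVecE B x)) : ℂ) := by
    intro x
    have h1 := rayleigh_lb hn H hH x
    have h2 := herm_re B x
    have h3 : (inner ℂ x (WithLp.toLp 2 (H.mulVec x : Fin n → ℂ) : EuclideanSpace ℂ (Fin n)) : ℂ)
        = inner ℂ x (WithLp.toLp 2 ((((1/2:ℂ) • (Bᴴ + B)).mulVec x : Fin n → ℂ)) : EuclideanSpace ℂ (Fin n)) := by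
      rw [hHdef]
    have h4 : (inner ℂ x (mulVecE B x) : ℂ)
        = inner ℂ x (WithLp.toLp 2 (B.mulVec x : Fin n → ℂ) : EuclideanSpace ℂ (Fin n)) := rfl
    rw [h4, ← h2, ← h3]
    exact h1
  have hclm : ∀ y : EuclideanSpace ℂ (Fin n),
      mulVecE B y = Matrix.toEuclideanCLM (𝕜 := ℂ) B y := by
    intro y
    apply (WithLp.equiv 2 (Fin n → ℂ)).injective
    rw [WithLp.equiv_apply, WithLp.equiv_apply, Matrix.ofLp_toEuclideanCLM]
    rfl
  have hBle : ∀ y : EuclideanSpace ℂ (Fin n), ‖mulVecE B y‖ ≤ N * ‖y‖ := by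
    intro y
    rw [hclm y]
    exact (Matrix.toEuclideanCLM (𝕜 := ℂ) B).le_opNorm y
  -- μ ≤ N
  have hre_le : ∀ x : EuclideanSpace ℂ (Fin n),
      Complex.re ((inner ℂ x (mulVecE B x)) : ℂ) ≤ N * ‖x‖ ^ 2 := by
    intro x
    calc Complex.re ((inner ℂ x (mulVecE B x)) : ℂ)
        ≤ ‖(inner ℂ x (mulVecE B x) : ℂ)‖ := Complex.re_le_norm _
      _ ≤ ‖x‖ * ‖mulVecE B x‖ := norm_inner_le_norm _ _
      _ ≤ ‖x‖ * (N * ‖x‖) := by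
          refine mul_le_mul_of_nonneg_left (hBle x) (norm_nonneg _)
      _ = N * ‖x‖ ^ 2 := by ring
  have hμN : μ ≤ N := by
    set x₀ : EuclideanSpace ℂ (Fin n) := EuclideanSpace.single ⟨0, hn⟩ (1 : ℂ) with hx₀
    have hnx : ‖x₀‖ = 1 := by simp [hx₀]
    have := le_trans (hray x₀) (hre_le x₀)
    rwa [hnx, one_pow, mul_one, mul_one] at this
  have hNpos : 0 < N := lt_of_lt_of_le hμpos hμN
  have hratio : 0 < μ / N := div_pos hμpos hNpos
  have hratio1 : μ / N ≤ 1 := (div_le_one hNpos).mpr hμN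
  have hnonneg : 0 ≤ 1 - (μ / N) ^ 2 := by nlinarith
  constructor
  · rw [Real.sqrt_lt' one_pos]
    nlinarith
  · intro r hr
    have hr0 : 0 < ‖r‖ := norm_pos_iff.mpr hr
    set s := mulVecE B r with hs
    set β := Complex.re ((inner ℂ r s) : ℂ) with hβdef
    have hβ : μ * ‖r‖ ^ 2 ≤ β := hray r
    have hβpos : 0 < β := lt_of_lt_of_le (by positivity) hβ
    have hs0 : s ≠ 0 := by
      intro h
      rw [hβdef, h] at hβpos
      simp at hβpos
    have hspos : 0 < ‖s‖ := norm_pos_iff.mpr hs0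
    have hsle : ‖s‖ ≤ N * ‖r‖ := hBle r
    set α := β / ‖s‖ ^ 2 with hαdef
    refine ⟨α, ?_⟩
    have hexp : mulVecE (1 - (α : ℂ) • B) r = r - (α : ℂ) • s := by
      apply PiLp.ext
      intro j
      show ((1 - (α : ℂ) • B) *ᵥ r) j = (r - (α : ℂ) • s) j
      rw [Matrix.sub_mulVec, Matrix.smul_mulVec, Matrix.one_mulVec]
      simp [hs, mulVecE]
    rw [hexp]
    -- norm squared computation
    have hnorm : ‖r - (α : ℂ) • s‖ ^ 2 = ‖r‖ ^ 2 - β ^ 2 / ‖s‖ ^ 2 := by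
      rw [@norm_sub_sq ℂ _ _ _ _ r ((α : ℂ) • s)]
      rw [inner_smul_right]
      rw [norm_smul]
      have : (RCLike.re ((α : ℂ) * (inner ℂ r s : ℂ))) = α * β := by
        simp [hβdef, Complex.mul_re]
      rw [this]
      have hαnorm : ‖(α : ℂ)‖ = |α| := by simp
      rw [hαnorm]
      have hss : ‖s‖ ^ 2 ≠ 0 := by positivity
      rw [hαdef]
      rw [mul_pow, sq_abs]
      field_simp
      ring
    have hbound : ‖r - (α : ℂ) • s‖ ^ 2 ≤ (1 - (μ / N) ^ 2) * ‖r‖ ^ 2 := by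
      rw [hnorm]
      have hkey : (μ / N) ^ 2 * ‖r‖ ^ 2 ≤ β ^ 2 / ‖s‖ ^ 2 := by
        have h1 : (μ * ‖r‖ ^ 2) ^ 2 ≤ β ^ 2 := by
          apply pow_le_pow_left₀ (by positivity) hβ
        have h2 : ‖s‖ ^ 2 ≤ (N * ‖r‖) ^ 2 := by
          apply pow_le_pow_left₀ (norm_nonneg _) hsle
        calc (μ / N) ^ 2 * ‖r‖ ^ 2 = (μ * ‖r‖ ^ 2) ^ 2 / (N * ‖r‖) ^ 2 := by
              field_simp
          _ ≤ β ^ 2 / ‖s‖ ^ 2 := by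
              apply div_le_div₀ (sq_nonneg β) h1 (by positivity) h2
      nlinarith
    calc ‖r - (α : ℂ) • s‖ = Real.sqrt (‖r - (α : ℂ) • s‖ ^ 2) := by
          rw [Real.sqrt_sq (norm_nonneg _)]
      _ ≤ Real.sqrt ((1 - (μ / N) ^ 2) * ‖r‖ ^ 2) := Real.sqrt_le_sqrt hbound
      _ = Real.sqrt (1 - (μ / N) ^ 2) * ‖r‖ := by
          rw [Real.sqrt_mul hnonneg, Real.sqrt_sq (norm_nonneg _)]
end

section
/- Let A be an n×n complex matrix and P₁(X),...,P_m(X) complex polynomials. Suppose the vector sequence {t_n} satisfies t_n = Σ_{j=1}^m P_j(A) t_{n-j} for n ≥ 1 with initial values t₀,...,t_{1-m}. If for every eigenvalue λ of A, every root X of the polynomial P(λ,X) = X^m - Σ_{j=1}^m P_j(λ) X^{m-j} has |X| < 1, then t_n → 0 as n → ∞. -/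
open Matrix Filter Polynomial

attribute [local instance] Matrix.linftyOpNormedRing Matrix.linftyOpNormedAlgebra

lemma aux_pow_norm_tendsto {ι : Type*} [Fintype ι] [DecidableEq ι] [Nonempty ι]
    (M : Matrix ι ι ℂ) (h : ∀ μ ∈ spectrum ℂ M, ‖μ‖₊ < 1) :
    Tendsto (fun k : ℕ => ‖M ^ k‖) atTop (nhds 0) := by
  haveI : CompleteSpace (Matrix ι ι ℂ) := FiniteDimensional.complete ℂ _
  have hne : (spectrum ℂ M).Nonempty :=
    spectrum.nonempty_of_isAlgClosed_of_finiteDimensional ℂ M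
  have hρ : spectralRadius ℂ M < 1 := by
    simpa using spectrum.spectralRadius_lt_of_forall_lt_of_nonempty hne (r := 1) h
  obtain ⟨c, hc1, hc2⟩ := exists_between hρ
  have hgel := spectrum.pow_nnnorm_pow_one_div_tendsto_nhds_spectralRadius M
  have hev : ∀ᶠ k : ℕ in atTop, (‖M ^ k‖₊ : ENNReal) ^ (1 / (k : ℝ)) < c :=
    hgel.eventually_lt_const hc1
  have hbound : ∀ᶠ k in atTop, (‖M ^ k‖₊ : ENNReal) ≤ c ^ k := by
    filter_upwards [hev, eventually_ge_atTop 1] with k hk hk1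
    have hk0 : (k : ℝ) ≠ 0 := Nat.cast_ne_zero.mpr (by omega)
    calc (‖M ^ k‖₊ : ENNReal)
        = ((‖M ^ k‖₊ : ENNReal) ^ (1 / (k : ℝ))) ^ (k : ℝ) := by
          rw [← ENNReal.rpow_mul, one_div, inv_mul_cancel₀ hk0, ENNReal.rpow_one]
      _ ≤ c ^ (k : ℝ) := by
          exact ENNReal.rpow_le_rpow hk.le (Nat.cast_nonneg k)
      _ = c ^ k := by rw [ENNReal.rpow_natCast]
  have hcpow : Tendsto (fun k : ℕ => c ^ k) atTop (nhds 0) :=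
    ENNReal.tendsto_pow_atTop_nhds_zero_of_lt_one hc2
  have h0 : Tendsto (fun k : ℕ => (‖M ^ k‖₊ : ENNReal)) atTop (nhds 0) := by
    refine tendsto_of_tendsto_of_tendsto_of_le_of_le' tendsto_const_nhds hcpow ?_ hbound
    exact Eventually.of_forall fun k => zero_le
  have h1 : Tendsto (fun k : ℕ => ‖M ^ k‖₊) atTop (nhds 0) := by
    rw [← ENNReal.coe_zero] at h0
    exact ENNReal.tendsto_coe.mp h0
  have h2 : Tendsto (fun k : ℕ => ((‖M ^ k‖₊ : ℝ))) atTop (nhds ((0 : NNReal) : ℝ)) :=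
    NNReal.tendsto_coe.mpr h1
  simpa using h2

lemma aux_sum_mulVec {ι κ : Type*} [Fintype κ] (S : Finset ι)
    (f : ι → Matrix κ κ ℂ) (w : κ → ℂ) :
    (∑ l ∈ S, f l) *ᵥ w = ∑ l ∈ S, f l *ᵥ w := by
  funext i
  simp only [Matrix.mulVec, dotProduct, Finset.sum_apply, Matrix.sum_apply, Finset.sum_mul]
  rw [Finset.sum_comm]

set_option maxHeartbeats 1000000 in
theorem stmt6 {n : ℕ} (m : ℕ) (A : Matrix (Fin n) (Fin n) ℂ)
    (P : ℕ → Polynomial ℂ) (t : ℤ → Fin n → ℂ)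
    (hrec : ∀ N : ℤ, 1 ≤ N →
      t N = ∑ j ∈ Finset.range m, (Polynomial.aeval A (P j)).mulVec (t (N - (j + 1))))
    (hroots : ∀ μ ∈ spectrum ℂ A, ∀ z : ℂ,
      z ^ m = ∑ j ∈ Finset.range m, (P j).eval μ * z ^ (m - 1 - j) →
      ‖z‖ < 1) :
    Tendsto (fun N : ℕ => t (N : ℤ)) atTop (nhds 0) := by
  -- trivial case m = 0
  rcases Nat.eq_zero_or_pos m with hm | hm
  · subst hm
    have hz : ∀ᶠ N : ℕ in atTop, (0 : Fin n → ℂ) = t (N : ℤ) := by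
      filter_upwards [eventually_ge_atTop 1] with N hN
      have := hrec (N : ℤ) (by exact_mod_cast hN)
      simpa using this.symm
    exact Tendsto.congr' hz tendsto_const_nhds
  -- trivial case n = 0
  rcases Nat.eq_zero_or_pos n with hn | hn
  · refine tendsto_const_nhds.congr fun N => ?_
    exact funext fun i => absurd i.isLt (by omega)
  haveI : Nonempty (Fin m) := ⟨⟨0, hm⟩⟩
  haveI : Nonempty (Fin n) := ⟨⟨0, hn⟩⟩
  -- the companion block matrix
  set B : Matrix (Fin m × Fin n) (Fin m × Fin n) ℂ :=
    fun p q => if (p.1 : ℕ) = 0 then (aeval A (P (q.1 : ℕ))) p.2 q.2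
               else if (q.1 : ℕ) + 1 = (p.1 : ℕ) ∧ q.2 = p.2 then 1 else 0 with hB
  have hrow0 : ∀ (u : Fin m × Fin n → ℂ) (i : Fin n),
      (B *ᵥ u) (⟨0, hm⟩, i) = ∑ l : Fin m, ((aeval A (P (l : ℕ))) *ᵥ fun i' => u (l, i')) i := by
    intro u i
    simp only [Matrix.mulVec, dotProduct, Fintype.sum_prod_type, hB]
    simp [Matrix.mulVec, dotProduct]
  have hrowk : ∀ (u : Fin m × Fin n → ℂ) (k : Fin m) (hk : (k : ℕ) ≠ 0) (i : Fin n),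
      (B *ᵥ u) (k, i) = u (⟨(k : ℕ) - 1, by omega⟩, i) := by
    intro u k hk i
    rw [Matrix.mulVec, dotProduct]
    rw [Finset.sum_eq_single ((⟨(k : ℕ) - 1, by omega⟩ : Fin m), i)]
    · have h1 : ((⟨(k : ℕ) - 1, by omega⟩ : Fin m) : ℕ) + 1 = (k : ℕ) := by
        show (k : ℕ) - 1 + 1 = (k : ℕ); omega
      simp [hB, hk, h1]
    · rintro ⟨l, i'⟩ - hne
      by_cases hc : (l : ℕ) + 1 = (k : ℕ) ∧ i' = i
      · obtain ⟨hc1, hc2⟩ := hc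
        exact absurd (Prod.ext (Fin.ext (show (l : ℕ) = (k : ℕ) - 1 by omega)) hc2) hne
      · simp [hB, hk, hc]
    · intro h; exact absurd (Finset.mem_univ _) h
  -- spectral bound for B
  have hBspec : ∀ z ∈ spectrum ℂ B, ‖z‖₊ < 1 := by
    intro z hz
    rw [spectrum.mem_iff] at hz
    have hdet : (algebraMap ℂ (Matrix (Fin m × Fin n) (Fin m × Fin n) ℂ) z - B).det = 0 := by
      by_contra hd
      exact hz ((Matrix.isUnit_iff_isUnit_det _).mpr (isUnit_iff_ne_zero.mpr hd))
    obtain ⟨v, hv0, hv⟩ := Matrix.exists_mulVec_eq_zero_iff.mpr hdet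
    have heig : B *ᵥ v = z • v := by
      have h1 : (algebraMap ℂ (Matrix (Fin m × Fin n) (Fin m × Fin n) ℂ) z - B) *ᵥ v
          = z • v - B *ᵥ v := by
        rw [Matrix.sub_mulVec, Algebra.algebraMap_eq_smul_one, Matrix.smul_mulVec,
          Matrix.one_mulVec]
      rw [h1] at hv
      exact (sub_eq_zero.mp hv).symm
    set w : Fin n → ℂ := fun i => v (⟨m - 1, by omega⟩, i) with hw
    have key : ∀ d : ℕ, d ≤ m - 1 → ∀ i, v (⟨m - 1 - d, by omega⟩, i) = z ^ d * w i := by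
      intro d
      induction d with
      | zero =>
        intro _ i
        have : (⟨m - 1 - 0, by omega⟩ : Fin m) = ⟨m - 1, by omega⟩ :=
          Fin.ext (show m - 1 - 0 = m - 1 by omega)
        rw [this, pow_zero, one_mul]
      | succ d ih =>
        intro hd i
        have hk : ((⟨m - 1 - d, by omega⟩ : Fin m) : ℕ) ≠ 0 := by
          show m - 1 - d ≠ 0; omega
        have h2 := congrFun heig ((⟨m - 1 - d, by omega⟩ : Fin m), i)
        rw [hrowk v _ hk i] at h2
        have h3 : (⟨((⟨m - 1 - d, by omega⟩ : Fin m) : ℕ) - 1, by omega⟩ : Fin m)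
            = (⟨m - 1 - (d + 1), by omega⟩ : Fin m) :=
          Fin.ext (show m - 1 - d - 1 = m - 1 - (d + 1) by omega)
        rw [h3] at h2
        have h4 := ih (by omega) i
        rw [h2, Pi.smul_apply, smul_eq_mul, h4, pow_succ']
        ring
    have hvw : ∀ (l : Fin m) (i : Fin n), v (l, i) = z ^ (m - 1 - (l : ℕ)) * w i := by
      intro l i
      have h1 : (⟨m - 1 - (m - 1 - (l : ℕ)), by omega⟩ : Fin m) = l :=
        Fin.ext (show m - 1 - (m - 1 - (l : ℕ)) = (l : ℕ) by have := l.isLt; omega)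
      have := key (m - 1 - (l : ℕ)) (by omega) i
      rwa [h1] at this
    have hwne : w ≠ 0 := by
      intro hw0
      apply hv0
      funext p
      obtain ⟨l, i⟩ := p
      rw [hvw l i, show w i = 0 from congrFun hw0 i, mul_zero]
      rfl
    -- top-row equation
    have htop : ∀ i, ∑ l : Fin m, z ^ (m - 1 - (l : ℕ)) * ((aeval A (P (l : ℕ))) *ᵥ w) i
        = z ^ m * w i := by
      intro i
      have h2 := congrFun heig ((⟨0, hm⟩ : Fin m), i)
      rw [hrow0 v i] at h2
      have h5 : ∀ l : Fin m, ((aeval A (P (l : ℕ))) *ᵥ fun i' => v (l, i')) i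
          = z ^ (m - 1 - (l : ℕ)) * ((aeval A (P (l : ℕ))) *ᵥ w) i := by
        intro l
        have : (fun i' => v (l, i')) = (z ^ (m - 1 - (l : ℕ))) • w := by
          funext i'; rw [hvw l i', Pi.smul_apply, smul_eq_mul]
        rw [this, Matrix.mulVec_smul, Pi.smul_apply, smul_eq_mul]
      rw [Finset.sum_congr rfl fun l _ => h5 l] at h2
      rw [h2, Pi.smul_apply, smul_eq_mul, hvw ⟨0, hm⟩ i]
      simp only []
      rw [← mul_assoc, ← pow_succ']
      congr 2
      omega
    -- the polynomial Q
    set Q : Polynomial ℂ :=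
      C (z ^ m) - ∑ l ∈ Finset.range m, C (z ^ (m - 1 - l)) * P l with hQ
    have haQ : (aeval A Q) *ᵥ w = 0 := by
      have hev : aeval A Q = (z ^ m) • (1 : Matrix (Fin n) (Fin n) ℂ)
          - ∑ l ∈ Finset.range m, (z ^ (m - 1 - l)) • aeval A (P l) := by
        rw [hQ, map_sub, map_sum]
        congr 1
        · rw [aeval_C, Algebra.algebraMap_eq_smul_one]
        · exact Finset.sum_congr rfl fun l _ => by
            rw [_root_.map_mul, aeval_C, Algebra.algebraMap_eq_smul_one, smul_mul_assoc, one_mul]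
      funext i
      rw [hev, Matrix.sub_mulVec, Matrix.smul_mulVec, Matrix.one_mulVec]
      have hsum : (∑ l ∈ Finset.range m, (z ^ (m - 1 - l)) • aeval A (P l)) *ᵥ w
          = ∑ l ∈ Finset.range m, (z ^ (m - 1 - l)) • ((aeval A (P l)) *ᵥ w) := by
        rw [aux_sum_mulVec]
        exact Finset.sum_congr rfl fun l _ => Matrix.smul_mulVec _ _ _
      rw [hsum]
      have := htop i
      rw [← Fin.sum_univ_eq_sum_range (fun l => z ^ (m - 1 - l) • (aeval A (P l) *ᵥ w))]
      simp only [Pi.sub_apply, Pi.smul_apply, Finset.sum_apply, smul_eq_mul, Pi.zero_apply]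
      rw [sub_eq_zero]
      exact (this).symm
    have hdet2 : (aeval A Q).det = 0 := Matrix.exists_mulVec_eq_zero_iff.mp ⟨w, hwne, haQ⟩
    have h0spec : (0 : ℂ) ∈ spectrum ℂ (aeval A Q) := by
      rw [spectrum.zero_mem_iff]
      intro hu
      have := (Matrix.isUnit_iff_isUnit_det _).mp hu
      rw [hdet2] at this
      exact this.ne_zero rfl
    have hAne : (spectrum ℂ A).Nonempty := by
      exact spectrum.nonempty_of_isAlgClosed_of_finiteDimensional ℂ A
    rw [spectrum.map_polynomial_aeval_of_nonempty A Q hAne] at h0spec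
    obtain ⟨μ, hμ, hμ0⟩ := h0spec
    have heval : z ^ m = ∑ j ∈ Finset.range m, (P j).eval μ * z ^ (m - 1 - j) := by
      have h6 : eval μ Q = z ^ m - ∑ l ∈ Finset.range m, z ^ (m - 1 - l) * (P l).eval μ := by
        simp [hQ, eval_finset_sum]
      have hμ0' : eval μ Q = 0 := hμ0
      rw [h6, sub_eq_zero] at hμ0'
      rw [hμ0']
      exact Finset.sum_congr rfl fun l _ => mul_comm _ _
    have habs := hroots μ hμ z heval
    have hnorm : ‖z‖ < 1 := by exact habs
    exact_mod_cast hnorm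
  have hBpow := aux_pow_norm_tendsto B hBspec
  -- the state sequence
  set s : ℕ → (Fin m × Fin n → ℂ) := fun N p => t ((N : ℤ) - ((p.1 : ℕ) : ℤ)) p.2 with hs
  have hstep : ∀ N : ℕ, s (N + 1) = B *ᵥ s N := by
    intro N
    funext p
    obtain ⟨k, i⟩ := p
    by_cases hk : (k : ℕ) = 0
    · have hk' : k = ⟨0, hm⟩ := Fin.ext hk
      subst hk'
      rw [hrow0 (s N) i]
      have h7 := congrFun (hrec ((N : ℤ) + 1) (by omega)) i
      have hk0 : ((⟨0, hm⟩ : Fin m) : ℕ) = 0 := rfl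
      have h8 : s (N + 1) (⟨0, hm⟩, i) = t ((N : ℤ) + 1) i := by
        simp only [hs, hk0]
        congr 1
      rw [h8, h7]
      rw [← Fin.sum_univ_eq_sum_range
        (fun j => ((aeval A (P j)) *ᵥ t ((N : ℤ) + 1 - ((j : ℕ) + 1)))) m]
      simp only [Finset.sum_apply]
      refine Finset.sum_congr rfl fun l _ => ?_
      have h9 : (fun i' => s N (l, i')) = t ((N : ℤ) + 1 - ((l : ℕ) + 1)) := by
        funext i'
        simp only [hs]
        congr 1
        push_cast
        ring
      rw [h9]
    · rw [hrowk (s N) k hk i]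
      simp only [hs]
      congr 1
      have h1 : (((k : ℕ) - 1 : ℕ) : ℤ) = ((k : ℕ) : ℤ) - 1 := by
        have : 1 ≤ (k : ℕ) := by omega
        omega
      all_goals push_cast [h1]
      all_goals ring
  have hpow : ∀ N : ℕ, s N = (B ^ N) *ᵥ s 0 := by
    intro N
    induction N with
    | zero => rw [pow_zero, Matrix.one_mulVec]
    | succ N ih => rw [hstep, ih, Matrix.mulVec_mulVec, ← pow_succ']
  refine tendsto_pi_nhds.mpr fun i => ?_
  have hbnd : ∀ N : ℕ, ‖t (N : ℤ) i‖ ≤ ‖B ^ N‖ * ‖s 0‖ := by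
    intro N
    have h10 : t (N : ℤ) i = s N (⟨0, hm⟩, i) := by
      have hk0 : ((⟨0, hm⟩ : Fin m) : ℕ) = 0 := rfl
      simp [hs, hk0]
    rw [h10, hpow N]
    calc ‖((B ^ N) *ᵥ s 0) (⟨0, hm⟩, i)‖ ≤ ‖(B ^ N) *ᵥ s 0‖ :=
          norm_le_pi_norm _ _
      _ ≤ ‖B ^ N‖ * ‖s 0‖ := Matrix.linfty_opNorm_mulVec _ _
  have hlim : Tendsto (fun N : ℕ => ‖B ^ N‖ * ‖s 0‖) atTop (nhds 0) := by
    simpa using hBpow.mul_const ‖s 0‖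
  simpa using squeeze_zero_norm hbnd hlim
end

section
/- Let A be an n×n complex matrix and P₁,...,P_m polynomials such that for some eigenvalue λ of A, the polynomial P(λ,X) = X^m - Σ_{j=1}^m P_j(λ)X^{m-j} has a root of modulus R ≥ 1. Then there exist initial vectors t₀,...,t_{1-m} such that the sequence defined by t_n = Σ_{j=1}^m P_j(A) t_{n-j} does not converge to 0. -/
open Matrix Filter

theorem stmt7 {n : ℕ} (m : ℕ) (A : Matrix (Fin n) (Fin n) ℂ)
    (P : ℕ → Polynomial ℂ) (μ : ℂ) (hμ : μ ∈ spectrum ℂ A) (z : ℂ)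
    (hz : z ^ m = ∑ j ∈ Finset.range m, (P j).eval μ * z ^ (m - 1 - j))
    (hR : 1 ≤ ‖z‖) :
    ∃ t : ℤ → Fin n → ℂ,
      (∀ N : ℤ, 1 ≤ N →
        t N = ∑ j ∈ Finset.range m, (Polynomial.aeval A (P j)).mulVec (t (N - (j + 1))))
      ∧ ¬ Tendsto (fun N : ℕ => t (N : ℤ)) atTop (nhds 0) := by
  rcases Nat.eq_zero_or_pos m with hm | hm
  · subst hm; simp at hz
  have hz0 : z ≠ 0 := by
    intro h; rw [h] at hR; norm_num at hR
  -- eigenvector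
  rw [spectrum.mem_iff] at hμ
  have hdet : (algebraMap ℂ (Matrix (Fin n) (Fin n) ℂ) μ - A).det = 0 := by
    by_contra h
    exact hμ ((Matrix.isUnit_iff_isUnit_det _).2 (Ne.isUnit h))
  obtain ⟨v, hv0, hv⟩ := (Matrix.exists_mulVec_eq_zero_iff).2 hdet
  have hAv : A.mulVec v = μ • v := by
    have h1 : (algebraMap ℂ (Matrix (Fin n) (Fin n) ℂ) μ - A).mulVec v
        = μ • v - A.mulVec v := by
      rw [Matrix.sub_mulVec, Algebra.algebraMap_eq_smul_one, Matrix.smul_mulVec,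
        Matrix.one_mulVec]
    rw [h1] at hv
    linear_combination (norm := module) -hv
  have hpow : ∀ k : ℕ, (A ^ k).mulVec v = μ ^ k • v := by
    intro k
    induction k with
    | zero => simp [Matrix.one_mulVec]
    | succ k ih =>
      rw [pow_succ', ← Matrix.mulVec_mulVec, ih, Matrix.mulVec_smul, hAv,
        smul_smul, ← pow_succ]
  have key : ∀ p : Polynomial ℂ, (Polynomial.aeval A p).mulVec v = p.eval μ • v := by
    intro p
    induction p using Polynomial.induction_on' with
    | add p q hp hq => simp [Matrix.add_mulVec, hp, hq, add_smul]
    | monomial k a =>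
      rw [Polynomial.aeval_monomial, Polynomial.eval_monomial,
        Algebra.algebraMap_eq_smul_one, smul_mul_assoc, one_mul,
        Matrix.smul_mulVec, hpow, smul_smul]
  have hrec : ∀ N : ℤ, z ^ N = ∑ j ∈ Finset.range m, (P j).eval μ * z ^ (N - (j + 1)) := by
    intro N
    have h1 : z ^ N = z ^ (m : ℤ) * z ^ (N - m) := by
      rw [← zpow_add₀ hz0]; ring_nf
    rw [h1, zpow_natCast, hz, Finset.sum_mul]
    refine Finset.sum_congr rfl fun j hj => ?_
    rw [Finset.mem_range] at hj
    rw [mul_assoc, ← zpow_natCast z (m - 1 - j), ← zpow_add₀ hz0]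
    congr 1
    have hc : ((m - 1 - j : ℕ) : ℤ) = (m : ℤ) - 1 - j := by omega
    rw [hc]; ring_nf
  refine ⟨fun N => z ^ N • v, fun N hN => ?_, ?_⟩
  · have hterm : ∀ j : ℕ, (Polynomial.aeval A (P j)).mulVec (z ^ (N - (j + 1)) • v)
        = ((P j).eval μ * z ^ (N - (j + 1))) • v := by
      intro j
      rw [Matrix.mulVec_smul, key, smul_smul, mul_comm]
    simp only [hterm]
    rw [← Finset.sum_smul, ← hrec]
  · intro h
    obtain ⟨i, hi⟩ := Function.ne_iff.mp hv0
    have hco : Tendsto (fun N : ℕ => (z ^ (N : ℤ) • v) i) atTop (nhds (0 : ℂ)) := by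
      have := tendsto_pi_nhds.mp h i
      simpa using this
    have hnorm : Tendsto (fun N : ℕ => ‖(z ^ (N : ℤ) • v) i‖) atTop (nhds 0) := by
      simpa using hco.norm
    have hlb : ∀ N : ℕ, ‖v i‖ ≤ ‖(z ^ (N : ℤ) • v) i‖ := by
      intro N
      have : (z ^ (N : ℤ) • v) i = z ^ N * v i := by
        rw [zpow_natCast]; rfl
      rw [this, norm_mul, norm_pow]
      nlinarith [norm_nonneg (v i), one_le_pow₀ (n := N) (a := ‖z‖) hR, norm_nonneg z]
    have : ‖v i‖ ≤ 0 := ge_of_tendsto' hnorm hlb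
    have : v i = 0 := by
      have := norm_nonneg (v i); have := norm_eq_zero.mp (le_antisymm ‹‖v i‖ ≤ 0› this)
      exact this
    exact hi this
end

section
/- Constant coefficient homogeneous operator coefficient method convergence criterion: the method x_n = Σ_{j=1}^m c_{0,j}x_{n-j} + Σ_{i=1}^k Σ_{j=1}^m c_{i,j}A^{i-1}r_{n-j}, with Σ_j c_{0,j} = 1, converges to a solution of Ax = y for all y and all initial vectors x₀,...,x_{1-m} if and only if for every eigenvalue λ of A, every root X of P(λ,X) = X^m - Σ_j P_j(λ)X^{m-j} satisfies |X| < 1, where P_j(λ) = c_{0,j} - c_{1,j}λ - ... - c_{k,j}λ^k. -/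
open Matrix Filter Polynomial

lemma sum_mulVec' {ι α : Type*} [Fintype α] [DecidableEq α] (s : Finset ι)
    (M : ι → Matrix α α ℂ) (v : α → ℂ) :
    (∑ j ∈ s, M j) *ᵥ v = ∑ j ∈ s, (M j) *ᵥ v :=
  map_sum (Matrix.mulVec.addMonoidHomLeft v) M s

lemma not_tendsto_pow_aux (z : ℂ) (hz : 1 ≤ ‖z‖) (hz1 : z ≠ 1) (L : ℂ) :
    ¬ Tendsto (fun N : ℕ => z ^ N) atTop (nhds L) := by
  intro h
  have h1 : Tendsto (fun N : ℕ => z ^ (N + 1)) atTop (nhds L) :=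
    h.comp (tendsto_add_atTop_nat 1)
  have h2 : Tendsto (fun N : ℕ => z * z ^ N) atTop (nhds (z * L)) := h.const_mul z
  have h3 : L = z * L := by
    refine tendsto_nhds_unique h1 ?_
    simpa [pow_succ, mul_comm] using h2
  have hL : L = 0 := by
    have : (z - 1) * L = 0 := by linear_combination -h3
    rcases mul_eq_zero.1 this with h | h
    · exact absurd (sub_eq_zero.1 h) hz1
    · exact h
  have h4 : Tendsto (fun N : ℕ => ‖z ^ N‖) atTop (nhds ‖L‖) := h.norm
  have h5 : (1:ℝ) ≤ ‖L‖ := by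
    refine ge_of_tendsto' h4 fun N => ?_
    rw [norm_pow]
    exact one_le_pow₀ (by simpa using hz)
  rw [hL, norm_zero] at h5; linarith
lemma pow_mulVec_tendsto_zero_aux {ι : Type*} [Fintype ι] [DecidableEq ι] [Nonempty ι]
    (M : Matrix ι ι ℂ) (hspec : ∀ z ∈ spectrum ℂ M, ‖z‖₊ < 1) (v : ι → ℂ) :
    Tendsto (fun N : ℕ => (M ^ N) *ᵥ v) atTop (nhds 0) := by
  letI : NormedRing (Matrix ι ι ℂ) := Matrix.linftyOpNormedRing
  letI : NormedAlgebra ℂ (Matrix ι ι ℂ) := Matrix.linftyOpNormedAlgebra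
  letI : CompleteSpace (Matrix ι ι ℂ) := FiniteDimensional.complete ℂ _
  have hρ : spectralRadius ℂ M < 1 := by
    have := spectrum.spectralRadius_lt_of_forall_lt M (r := 1) hspec
    simpa using this
  obtain ⟨r, hr1, hr2⟩ := ENNReal.lt_iff_exists_nnreal_btwn.1 hρ
  have hgel := spectrum.pow_nnnorm_pow_one_div_tendsto_nhds_spectralRadius M
  have hev : ∀ᶠ N : ℕ in atTop, (‖M ^ N‖₊ : ENNReal) ^ (1 / (N:ℝ)) < r :=
    hgel.eventually_lt_const hr1
  have hr2' : r < 1 := by exact_mod_cast hr2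
  have hbound : ∀ᶠ N : ℕ in atTop, ‖(M ^ N) *ᵥ v‖ ≤ (r:ℝ) ^ N * ‖v‖ := by
    filter_upwards [hev, eventually_ge_atTop 1] with N hN hN1
    have hMN : ‖M ^ N‖₊ < r ^ N := by
      have hNne : (N:ℝ) ≠ 0 := by positivity
      have := ENNReal.rpow_lt_rpow hN (by positivity : (0:ℝ) < (N:ℝ))
      rw [← ENNReal.rpow_mul, one_div, inv_mul_cancel₀ hNne, ENNReal.rpow_one,
        ENNReal.rpow_natCast] at this
      exact_mod_cast this
    calc ‖(M ^ N) *ᵥ v‖ ≤ ‖M ^ N‖ * ‖v‖ := Matrix.linfty_opNorm_mulVec _ _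
    _ ≤ (r:ℝ) ^ N * ‖v‖ := by
        have : ‖M ^ N‖ ≤ (r:ℝ)^N := by
          have := hMN.le
          exact_mod_cast this
        exact mul_le_mul_of_nonneg_right this (norm_nonneg _)
  have hgeo : Tendsto (fun N : ℕ => (r:ℝ) ^ N * ‖v‖) atTop (nhds 0) := by
    simpa using (tendsto_pow_atTop_nhds_zero_of_lt_one r.coe_nonneg hr2').mul_const ‖v‖
  exact squeeze_zero_norm' hbound hgeo
lemma mem_spectrum_iff_exists_aux {ι : Type*} [Fintype ι] [DecidableEq ι]
    (M : Matrix ι ι ℂ) (z : ℂ) :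
    z ∈ spectrum ℂ M ↔ ∃ v, v ≠ 0 ∧ M *ᵥ v = z • v := by
  rw [spectrum.mem_iff, Matrix.isUnit_iff_isUnit_det, isUnit_iff_ne_zero, not_not,
    ← Matrix.exists_mulVec_eq_zero_iff]
  constructor
  · rintro ⟨v, hv, hMv⟩
    refine ⟨v, hv, ?_⟩
    rw [Matrix.sub_mulVec, Algebra.algebraMap_eq_smul_one, Matrix.smul_mulVec,
      Matrix.one_mulVec, sub_eq_zero] at hMv
    exact hMv.symm
  · rintro ⟨v, hv, hMv⟩
    refine ⟨v, hv, ?_⟩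
    rw [Matrix.sub_mulVec, Algebra.algebraMap_eq_smul_one, Matrix.smul_mulVec,
      Matrix.one_mulVec, sub_eq_zero, hMv]

lemma pow_mulVec_eigen_aux {ι : Type*} [Fintype ι] [DecidableEq ι]
    (M : Matrix ι ι ℂ) (μ : ℂ) (v : ι → ℂ) (hv : M *ᵥ v = μ • v) (i : ℕ) :
    (M ^ i) *ᵥ v = μ ^ i • v := by
  induction i with
  | zero => simp [Matrix.one_mulVec]
  | succ i ih =>
      rw [pow_succ, ← Matrix.mulVec_mulVec, hv, Matrix.mulVec_smul, ih, pow_succ, smul_smul,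
        mul_comm]
noncomputable def gseq {n : ℕ} (k m : ℕ) (A : Matrix (Fin n) (Fin n) ℂ)
    (c : ℕ → ℕ → ℂ) (y : Fin n → ℂ) : ℕ → (Fin n → ℂ)
  | 0 => 0
  | (N+1) =>
      (∑ j ∈ Finset.range m, c 0 j • (gseq k m A c y (N - j)))
        + ∑ i ∈ Finset.range k, ∑ j ∈ Finset.range m,
            c (i+1) j • (A ^ i).mulVec (y - A.mulVec (gseq k m A c y (N - j)))
  decreasing_by all_goals omega

lemma gseq_spec {n : ℕ} (k m : ℕ) (A : Matrix (Fin n) (Fin n) ℂ)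
    (c : ℕ → ℕ → ℂ) (y : Fin n → ℂ) :
    ∀ N : ℤ, 1 ≤ N →
      (fun N : ℤ => if 0 ≤ N then gseq k m A c y N.toNat else 0) N
        = (∑ j ∈ Finset.range m, c 0 j •
            (fun N : ℤ => if 0 ≤ N then gseq k m A c y N.toNat else 0) (N - (j + 1)))
          + ∑ i ∈ Finset.range k, ∑ j ∈ Finset.range m,
              c (i + 1) j • (A ^ i).mulVec (y - A.mulVec
                ((fun N : ℤ => if 0 ≤ N then gseq k m A c y N.toNat else 0) (N - (j + 1)))) := by
  intro N hN
  obtain ⟨N', rfl⟩ : ∃ N' : ℕ, N = (N' : ℤ) + 1 := ⟨(N - 1).toNat, by omega⟩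
  have key : ∀ j : ℕ, (fun N : ℤ => if 0 ≤ N then gseq k m A c y N.toNat else 0)
      (((N' : ℤ) + 1) - (j + 1)) = gseq k m A c y (N' - j) := by
    intro j
    by_cases h : (j : ℤ) ≤ N'
    · have h0 : (0:ℤ) ≤ ((N' : ℤ) + 1) - (j + 1) := by omega
      have : (((N' : ℤ) + 1) - (j + 1)).toNat = N' - j := by omega
      simp only [h0, if_pos, this]
    · have h0 : ¬ (0:ℤ) ≤ ((N' : ℤ) + 1) - (j + 1) := by omega
      have : N' - j = 0 := by omega
      simp only [h0, if_neg, not_false_iff, this, gseq]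
  simp only [key]
  have h0 : (0:ℤ) ≤ (N' : ℤ) + 1 := by omega
  have ht : (((N' : ℤ) + 1)).toNat = N' + 1 := by omega
  simp only [h0, if_pos, ht]
  rw [gseq]
section Companion

variable {n : ℕ} (m : ℕ) (B : ℕ → Matrix (Fin n) (Fin n) ℂ)

noncomputable def compC : Matrix (Fin m × Fin n) (Fin m × Fin n) ℂ :=
  fun sp tq =>
    if (sp.1 : ℕ) = 0 then B (tq.1 : ℕ) sp.2 tq.2
    else if (sp.1 : ℕ) = (tq.1 : ℕ) + 1 then (if sp.2 = tq.2 then 1 else 0) else 0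

lemma compC_mulVec_zero (u : Fin m × Fin n → ℂ) (s : Fin m) (hs : (s : ℕ) = 0) (p : Fin n) :
    ((compC m B) *ᵥ u) (s, p) = ∑ t : Fin m, ((B t) *ᵥ (fun q => u (t, q))) p := by
  simp only [Matrix.mulVec, dotProduct, compC, Fintype.sum_prod_type, hs, if_pos]

lemma compC_mulVec_succ (u : Fin m × Fin n → ℂ) (s t : Fin m) (hs : (s : ℕ) = (t : ℕ) + 1)
    (p : Fin n) :
    ((compC m B) *ᵥ u) (s, p) = u (t, p) := by
  have hs0 : (s : ℕ) ≠ 0 := by omega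
  simp only [Matrix.mulVec, dotProduct, compC, Fintype.sum_prod_type, hs0, if_neg,
    not_false_iff, ite_mul, one_mul, zero_mul]
  rw [Finset.sum_eq_single t]
  · simp [hs]
  · intro b _ hb
    have : (s : ℕ) ≠ (b : ℕ) + 1 := by
      intro h; apply hb; apply Fin.ext; omega
    simp [this]
  · simp

end Companion

section Companion2

variable {n : ℕ} {m : ℕ} {B : ℕ → Matrix (Fin n) (Fin n) ℂ}

lemma compC_eigen (hm : 1 ≤ m) (u : Fin m × Fin n → ℂ) (hu : u ≠ 0) (z : ℂ)
    (huz : (compC m B) *ᵥ u = z • u) :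
    ∃ w : Fin n → ℂ, w ≠ 0 ∧
      z ^ m • w = ∑ t ∈ Finset.range m, z ^ (m - 1 - t) • ((B t) *ᵥ w) := by
  set w : Fin n → ℂ := fun p => u (⟨m - 1, by omega⟩, p) with hw
  have hcl : ∀ t : ℕ, t < m → ∀ p, u (⟨m - 1 - t, by omega⟩, p) = z ^ t * w p := by
    intro t
    induction t with
    | zero => intro _ p; simp [hw]
    | succ t ih =>
        intro ht p
        have ht' : t < m := by omega
        have hrel : ((compC m B) *ᵥ u) (⟨m - 1 - t, by omega⟩, p)
            = u (⟨m - 1 - (t + 1), by omega⟩, p) :=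
          compC_mulVec_succ m B u _ _ (by simp; omega) p
        have := congrFun huz (⟨m - 1 - t, by omega⟩, p)
        rw [hrel] at this
        rw [this, Pi.smul_apply, smul_eq_mul, ih ht' p, pow_succ]
        ring
  have hwne : w ≠ 0 := by
    intro hw0
    apply hu
    funext sp
    obtain ⟨⟨s, hs⟩, p⟩ := sp
    have hsm : s = m - 1 - (m - 1 - s) := by omega
    have := hcl (m - 1 - s) (by omega) p
    rw [show (⟨m - 1 - (m - 1 - s), by omega⟩ : Fin m) = ⟨s, hs⟩ from by simp; omega] at this
    rw [Pi.zero_apply, this, hw0]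
    simp
  refine ⟨w, hwne, ?_⟩
  have hrow0 := congrFun huz
  funext p
  have h0 : ((compC m B) *ᵥ u) (⟨0, by omega⟩, p)
      = ∑ t : Fin m, ((B t) *ᵥ (fun q => u (t, q))) p :=
    compC_mulVec_zero m B u _ rfl p
  have h0' := congrFun huz (⟨0, by omega⟩, p)
  rw [h0] at h0'
  have hcomp : ∀ t : Fin m, (fun q => u (t, q)) = fun q => z ^ (m - 1 - (t : ℕ)) * w q := by
    intro t
    funext q
    have := hcl (m - 1 - (t : ℕ)) (by omega) q
    rw [show (⟨m - 1 - (m - 1 - (t:ℕ)), by omega⟩ : Fin m) = t from by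
      apply Fin.ext; simp; omega] at this
    exact this
  have hu0 : u (⟨0, by omega⟩, p) = z ^ (m - 1) * w p := by
    have := hcl (m - 1) (by omega) p
    rwa [show (⟨m - 1 - (m - 1), by omega⟩ : Fin m) = ⟨0, by omega⟩ from by simp] at this
  calc (z ^ m • w) p = z * (z ^ (m - 1) * w p) := by
        rw [Pi.smul_apply, smul_eq_mul, ← mul_assoc, ← pow_succ']
        congr 2
        omega
  _ = ∑ t : Fin m, ((B t) *ᵥ (fun q => u (t, q))) p := by
        rw [← hu0, h0']
        simp
  _ = (∑ t ∈ Finset.range m, z ^ (m - 1 - t) • ((B t) *ᵥ w)) p := by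
        rw [← Fin.sum_univ_eq_sum_range (fun t => z ^ (m - 1 - t) • ((B t) *ᵥ w)) m]
        rw [Finset.sum_apply]
        congr 1
        funext t
        rw [hcomp t, Pi.smul_apply, smul_eq_mul]
        rw [show (fun q => z ^ (m - 1 - (t:ℕ)) * w q) = z ^ (m - 1 - (t:ℕ)) • w from rfl]
        rw [Matrix.mulVec_smul]
        simp

end Companion2

section Companion3

variable {n : ℕ} {m : ℕ} {B : ℕ → Matrix (Fin n) (Fin n) ℂ}

lemma compC_iter (hm : 1 ≤ m) (e : ℤ → Fin n → ℂ)
    (herec : ∀ N : ℤ, 1 ≤ N → e N = ∑ j ∈ Finset.range m, (B j) *ᵥ e (N - (j + 1))) :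
    ∀ N : ℕ, (fun sp : Fin m × Fin n => e ((N : ℤ) - (sp.1 : ℕ)) sp.2)
      = ((compC m B) ^ N) *ᵥ (fun sp : Fin m × Fin n => e (0 - (sp.1 : ℕ)) sp.2) := by
  have hstep : ∀ N : ℕ,
      (fun sp : Fin m × Fin n => e (((N : ℤ) + 1) - (sp.1 : ℕ)) sp.2)
        = (compC m B) *ᵥ (fun sp : Fin m × Fin n => e ((N : ℤ) - (sp.1 : ℕ)) sp.2) := by
    intro N
    funext sp
    obtain ⟨s, p⟩ := sp
    by_cases hs : (s : ℕ) = 0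
    · rw [compC_mulVec_zero m B _ s hs p]
      have : (fun t : Fin m => ((B t) *ᵥ (fun q => e ((N : ℤ) - (t : ℕ)) q)) p)
          = fun t : Fin m => ((B (t:ℕ)) *ᵥ e ((N : ℤ) - (t:ℕ))) p := by
        funext t; rfl
      rw [this]
      have hrec := herec ((N : ℤ) + 1) (by omega)
      have : e (((N : ℤ) + 1) - (s : ℕ)) p = e ((N : ℤ) + 1) p := by rw [hs]; norm_num
      rw [this, hrec, Finset.sum_apply,
        ← Fin.sum_univ_eq_sum_range (fun j => ((B j) *ᵥ e (((N:ℤ) + 1) - (j + 1))) p) m]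
      apply Finset.sum_congr rfl
      intro t _
      have harg : ((N:ℤ) + 1) - ((t:ℕ) + 1) = (N:ℤ) - (t:ℕ) := by ring
      rw [harg]
    · have hs1 : (s : ℕ) = ((⟨(s:ℕ) - 1, by omega⟩ : Fin m) : ℕ) + 1 := by simp; omega
      rw [compC_mulVec_succ m B _ s ⟨(s:ℕ) - 1, by omega⟩ hs1 p]
      simp only
      have harg : ((N:ℤ) + 1) - ((s:ℕ) : ℤ) = (N:ℤ) - (((⟨(s:ℕ) - 1, by omega⟩ : Fin m) : ℕ) : ℤ) := by
        simp only [Fin.val_mk]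
        omega
      rw [harg]
  intro N
  induction N with
  | zero => simp [Matrix.one_mulVec]
  | succ N ih =>
      have : ((N : ℕ) : ℤ) + 1 = (((N + 1 : ℕ) : ℤ)) := by push_cast; ring
      rw [← this] at *
      rw [hstep N, ih, Matrix.mulVec_mulVec, ← pow_succ']
lemma spec_of_poly {n : ℕ} [hn : Nonempty (Fin n)] (A : Matrix (Fin n) (Fin n) ℂ)
    (k m : ℕ) (c : ℕ → ℕ → ℂ) (z : ℂ)
    (hdet : ¬ IsUnit (z ^ m • (1 : Matrix (Fin n) (Fin n) ℂ)
       - ∑ t ∈ Finset.range m, z ^ (m - 1 - t) •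
          (c 0 t • (1 : Matrix (Fin n) (Fin n) ℂ)
            - ∑ i ∈ Finset.range k, c (i+1) t • A ^ (i+1)))) :
    ∃ μ ∈ spectrum ℂ A, z ^ m = ∑ j ∈ Finset.range m,
      (c 0 j - ∑ i ∈ Finset.range k, c (i + 1) j * μ ^ (i + 1)) * z ^ (m - 1 - j) := by
  set Q : ℂ[X] := C (z ^ m) - ∑ t ∈ Finset.range m, Polynomial.C (z ^ (m - 1 - t)) *
      (Polynomial.C (c 0 t) - ∑ i ∈ Finset.range k, Polynomial.C (c (i+1) t) * X ^ (i+1))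
    with hQ
  have haev : aeval A Q = z ^ m • (1 : Matrix (Fin n) (Fin n) ℂ)
       - ∑ t ∈ Finset.range m, z ^ (m - 1 - t) •
          (c 0 t • (1 : Matrix (Fin n) (Fin n) ℂ)
            - ∑ i ∈ Finset.range k, c (i+1) t • A ^ (i+1)) := by
    simp only [hQ, map_sub, map_sum, _root_.map_mul, aeval_C, aeval_X_pow,
      Algebra.algebraMap_eq_smul_one, smul_mul_assoc, one_mul]
  have h0 : (0 : ℂ) ∈ spectrum ℂ (aeval A Q) := by
    rw [spectrum.zero_mem_iff, haev]; exact hdet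
  letI : NormedRing (Matrix (Fin n) (Fin n) ℂ) := Matrix.linftyOpNormedRing
  letI : NormedAlgebra ℂ (Matrix (Fin n) (Fin n) ℂ) := Matrix.linftyOpNormedAlgebra
  letI : CompleteSpace (Matrix (Fin n) (Fin n) ℂ) := FiniteDimensional.complete ℂ _
  have hne : (spectrum ℂ A).Nonempty := spectrum.nonempty A
  rw [spectrum.map_polynomial_aeval_of_nonempty A Q hne] at h0
  obtain ⟨μ, hμ, hev⟩ := h0
  refine ⟨μ, hμ, ?_⟩
  simp only [hQ, eval_sub, eval_C, eval_finset_sum, eval_mul, eval_pow, eval_X] at hev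
  have h2 : z ^ m = ∑ t ∈ Finset.range m,
      z ^ (m - 1 - t) * (c 0 t - ∑ i ∈ Finset.range k, c (i + 1) t * μ ^ (i + 1)) :=
    sub_eq_zero.mp hev
  rw [h2]
  exact Finset.sum_congr rfl fun t _ => mul_comm _ _
lemma scalar_seq_rec {n : ℕ} (k m : ℕ) (A : Matrix (Fin n) (Fin n) ℂ) (c : ℕ → ℕ → ℂ)
    (μ : ℂ) (v : Fin n → ℂ) (hAv : A *ᵥ v = μ • v) (φ : ℤ → ℂ)
    (hφ : ∀ N : ℤ, 1 ≤ N → φ N = ∑ j ∈ Finset.range m,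
        (c 0 j - ∑ i ∈ Finset.range k, c (i + 1) j * μ ^ (i + 1)) * φ (N - (j + 1))) :
    ∀ N : ℤ, 1 ≤ N →
      (fun N : ℤ => φ N • v) N
        = (∑ j ∈ Finset.range m, c 0 j • (fun N : ℤ => φ N • v) (N - (j + 1)))
          + ∑ i ∈ Finset.range k, ∑ j ∈ Finset.range m,
              c (i + 1) j • (A ^ i).mulVec
                ((0 : Fin n → ℂ) - A.mulVec ((fun N : ℤ => φ N • v) (N - (j + 1)))) := by
  intro N hN
  simp only
  have hterm : ∀ (i j : ℕ),
      c (i + 1) j • (A ^ i).mulVec ((0 : Fin n → ℂ) - A.mulVec (φ (N - (j + 1)) • v))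
        = (-(c (i + 1) j * μ ^ (i + 1) * φ (N - (j + 1)))) • v := by
    intro i j
    rw [zero_sub, Matrix.mulVec_smul, hAv, Matrix.mulVec_neg, Matrix.mulVec_smul,
      Matrix.mulVec_smul, pow_mulVec_eigen_aux A μ v hAv i]
    rw [smul_neg, smul_smul, smul_smul, smul_smul, ← neg_smul]
    congr 1
    rw [pow_succ]
    ring
  simp only [hterm, smul_smul, ← Finset.sum_smul, ← add_smul]
  congr 1
  rw [hφ N hN]
  rw [Finset.sum_comm (s := Finset.range k) (t := Finset.range m)]
  rw [← Finset.sum_add_distrib]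
  refine Finset.sum_congr rfl fun j _ => ?_
  rw [sub_mul, Finset.sum_mul, Finset.sum_neg_distrib, ← sub_eq_add_neg]

theorem stmt10 {n : ℕ} (k m : ℕ) (hm : 1 ≤ m) (A : Matrix (Fin n) (Fin n) ℂ)
    (c : ℕ → ℕ → ℂ)
    (hconsistent : ∑ j ∈ Finset.range m, c 0 j = 1) :
    (∀ (y : Fin n → ℂ) (x : ℤ → Fin n → ℂ),
      (∀ N : ℤ, 1 ≤ N →
        x N = (∑ j ∈ Finset.range m, c 0 j • x (N - (j + 1)))
          + ∑ i ∈ Finset.range k, ∑ j ∈ Finset.range m,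
              c (i + 1) j • (A ^ i).mulVec (y - A.mulVec (x (N - (j + 1))))) →
      ∃ xlim : Fin n → ℂ,
        Tendsto (fun N : ℕ => x (N : ℤ)) atTop (nhds xlim) ∧ A.mulVec xlim = y)
    ↔ ∀ μ ∈ spectrum ℂ A, ∀ z : ℂ,
        z ^ m = ∑ j ∈ Finset.range m,
          (c 0 j - ∑ i ∈ Finset.range k, c (i + 1) j * μ ^ (i + 1)) * z ^ (m - 1 - j) →
        ‖z‖ < 1 := by
  constructor
  · -- forward direction
    intro hconv μ hμ z hz
    by_contra habs
    push_neg at habs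
    -- A must be invertible
    have hA : IsUnit A := by
      by_contra hAu
      have hdet : A.det = 0 := by
        rw [Matrix.isUnit_iff_isUnit_det, isUnit_iff_ne_zero, not_not] at hAu
        exact hAu
      obtain ⟨v, hv, hAv⟩ := Matrix.exists_mulVec_eq_zero_iff.mpr hdet
      have hnotinj : ¬ Function.Injective A.mulVecLin := by
        intro hinj
        exact hv (by simpa using hinj (show A.mulVecLin v = A.mulVecLin 0 by simpa using hAv))
      have hnotsurj : ¬ Function.Surjective A.mulVecLin := fun hs =>
        hnotinj ((LinearMap.injective_iff_surjective (f := A.mulVecLin)).mpr hs)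
      rw [Function.Surjective] at hnotsurj
      push_neg at hnotsurj
      obtain ⟨y₀, hy₀⟩ := hnotsurj
      obtain ⟨xlim, _, hxl⟩ := hconv y₀
        (fun N : ℤ => if 0 ≤ N then gseq k m A c y₀ N.toNat else 0)
        (gseq_spec k m A c y₀)
      exact hy₀ xlim (by simpa using hxl)
    have hμ0 : μ ≠ 0 := by
      intro h
      rw [h, spectrum.zero_mem_iff] at hμ
      exact hμ hA
    obtain ⟨v, hv, hAv⟩ := (mem_spectrum_iff_exists_aux A μ).mp hμ
    by_cases hz1 : z = 1
    · subst hz1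
      have hz' : (1:ℂ) = ∑ j ∈ Finset.range m,
          (c 0 j - ∑ i ∈ Finset.range k, c (i + 1) j * μ ^ (i + 1)) := by
        simpa using hz
      have hφ : ∀ N : ℤ, 1 ≤ N → (fun _ : ℤ => (1:ℂ)) N = ∑ j ∈ Finset.range m,
          (c 0 j - ∑ i ∈ Finset.range k, c (i + 1) j * μ ^ (i + 1))
            * (fun _ : ℤ => (1:ℂ)) (N - (j + 1)) := by
        intro N _
        simpa using hz'
      obtain ⟨xlim, htend, hsol⟩ := hconv 0 (fun N : ℤ => (fun _ : ℤ => (1:ℂ)) N • v)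
        (scalar_seq_rec k m A c μ v hAv _ hφ)
      have hxv : xlim = v := by
        refine tendsto_nhds_unique htend ?_
        simpa using (tendsto_const_nhds : Tendsto (fun _ : ℕ => v) atTop (nhds v))
      rw [hxv, hAv] at hsol
      rcases smul_eq_zero.mp hsol with h | h
      · exact hμ0 h
      · exact hv h
    · have hz0 : z ≠ 0 := by
        intro h
        rw [h] at habs
        simp at habs
        linarith
      have hφ : ∀ N : ℤ, 1 ≤ N → (fun N : ℤ => z ^ N) N = ∑ j ∈ Finset.range m,
          (c 0 j - ∑ i ∈ Finset.range k, c (i + 1) j * μ ^ (i + 1))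
            * (fun N : ℤ => z ^ N) (N - (j + 1)) := by
        intro N _
        simp only
        calc z ^ N = z ^ (N - m) * z ^ (m : ℤ) := by
              rw [← zpow_add₀ hz0]
              congr 1
              ring
        _ = z ^ (N - m) * ∑ j ∈ Finset.range m,
              (c 0 j - ∑ i ∈ Finset.range k, c (i + 1) j * μ ^ (i + 1)) * z ^ (m - 1 - j) := by
              rw [zpow_natCast, hz]
        _ = ∑ j ∈ Finset.range m,
              (c 0 j - ∑ i ∈ Finset.range k, c (i + 1) j * μ ^ (i + 1)) * z ^ (N - (j + 1)) := by
              rw [Finset.mul_sum]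
              refine Finset.sum_congr rfl fun j hj => ?_
              have hjm : j < m := Finset.mem_range.mp hj
              rw [← zpow_natCast z (m - 1 - j), mul_left_comm, ← zpow_add₀ hz0]
              congr 2
              omega
      obtain ⟨xlim, htend, hsol⟩ := hconv 0 (fun N : ℤ => (fun N : ℤ => z ^ N) N • v)
        (scalar_seq_rec k m A c μ v hAv _ hφ)
      obtain ⟨p, hp⟩ := Function.ne_iff.mp hv
      have htendp : Tendsto (fun N : ℕ => z ^ (N : ℤ) * v p) atTop (nhds (xlim p)) := by
        have := ((continuous_apply p).tendsto xlim).comp htend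
        simpa [Function.comp_def] using this
      have htendz : Tendsto (fun N : ℕ => z ^ N) atTop (nhds (xlim p * (v p)⁻¹)) := by
        have h2 := htendp.mul_const (v p)⁻¹
        have : (fun N : ℕ => z ^ (N : ℤ) * v p * (v p)⁻¹) = fun N : ℕ => z ^ N := by
          funext N
          rw [mul_assoc, mul_inv_cancel₀ hp, mul_one, zpow_natCast]
        rwa [this] at h2
      exact not_tendsto_pow_aux z habs hz1 _ htendz
  · -- backward direction
    intro hroot y x hx
    rcases Nat.eq_zero_or_pos n with hn | hn
    · subst hn
      haveI : IsEmpty (Fin 0) := inferInstance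
      refine ⟨fun i => i.elim0, ?_, ?_⟩
      · have : (fun N : ℕ => x (N : ℤ)) = fun _ : ℕ => (fun i : Fin 0 => i.elim0) := by
          funext N
          exact funext fun i => i.elim0
        rw [this]
        exact tendsto_const_nhds
      · exact funext fun i => i.elim0
    haveI : Nonempty (Fin n) := ⟨⟨0, hn⟩⟩
    -- A is invertible
    have h0A : IsUnit A := by
      by_contra hAu
      have h0 : (0 : ℂ) ∈ spectrum ℂ A := (spectrum.zero_mem_iff ℂ).mpr hAu
      have := hroot 0 h0 1 (by
        simp only [one_pow, mul_one]
        rw [eq_comm]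
        calc ∑ j ∈ Finset.range m,
              (c 0 j - ∑ i ∈ Finset.range k, c (i + 1) j * (0:ℂ) ^ (i + 1))
            = ∑ j ∈ Finset.range m, c 0 j := by
              refine Finset.sum_congr rfl fun j _ => ?_
              simp
        _ = 1 := hconsistent)
      simp at this
    have hdetA : IsUnit A.det := (Matrix.isUnit_iff_isUnit_det A).mp h0A
    set xstar : Fin n → ℂ := A⁻¹ *ᵥ y with hxstar_def
    have hxstar : A *ᵥ xstar = y := by
      rw [hxstar_def, Matrix.mulVec_mulVec, Matrix.mul_nonsing_inv A hdetA, Matrix.one_mulVec]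
    set B : ℕ → Matrix (Fin n) (Fin n) ℂ := fun j =>
      c 0 j • (1 : Matrix (Fin n) (Fin n) ℂ)
        - ∑ i ∈ Finset.range k, c (i + 1) j • A ^ (i + 1) with hB
    have hBmul : ∀ (j : ℕ) (w : Fin n → ℂ),
        (B j) *ᵥ w = c 0 j • w - ∑ i ∈ Finset.range k, c (i + 1) j • ((A ^ (i + 1)) *ᵥ w) := by
      intro j w
      rw [hB]
      simp only [Matrix.sub_mulVec, Matrix.smul_mulVec, Matrix.one_mulVec,
        sum_mulVec']
    set e : ℤ → Fin n → ℂ := fun N => x N - xstar with he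
    have herec : ∀ N : ℤ, 1 ≤ N → e N = ∑ j ∈ Finset.range m, (B j) *ᵥ e (N - (j + 1)) := by
      intro N hN
      have hx' := hx N hN
      have hterm : ∀ (i j : ℕ),
          (A ^ i) *ᵥ (y - A *ᵥ x (N - (j + 1))) = -((A ^ (i + 1)) *ᵥ e (N - (j + 1))) := by
        intro i j
        have h1 : y - A *ᵥ x (N - (j + 1)) = -(A *ᵥ e (N - (j + 1))) := by
          rw [he]
          simp only [Matrix.mulVec_sub, hxstar]
          abel
        rw [h1, Matrix.mulVec_neg, Matrix.mulVec_mulVec, ← pow_succ]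
      have hxpart : ∑ j ∈ Finset.range m, c 0 j • x (N - (j + 1))
          = (∑ j ∈ Finset.range m, c 0 j • e (N - (j + 1))) + xstar := by
        have : ∀ j : ℕ, x (N - (j + 1)) = e (N - (j + 1)) + xstar := by
          intro j
          rw [he]
          simp
        simp only [this, smul_add, Finset.sum_add_distrib, ← Finset.sum_smul, hconsistent,
          one_smul]
      rw [he]
      simp only
      rw [hx', hxpart]
      simp only [hterm, smul_neg]
      rw [add_right_comm, add_sub_cancel_right, Finset.sum_comm, ← Finset.sum_add_distrib]
      refine Finset.sum_congr rfl fun j _ => ?_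
      rw [hBmul, Finset.sum_neg_distrib]
      abel
    -- companion iteration
    have hEiter := compC_iter (B := B) hm e herec
    -- spectrum of companion is small
    have hspecC : ∀ z ∈ spectrum ℂ (compC m B), ‖z‖₊ < 1 := by
      intro z hzC
      by_cases hz0 : z = 0
      · subst hz0
        simp
      obtain ⟨u, hu, huz⟩ := (mem_spectrum_iff_exists_aux (compC m B) z).mp hzC
      obtain ⟨w, hwne, hweq⟩ := compC_eigen hm u hu z huz
      set D : Matrix (Fin n) (Fin n) ℂ := z ^ m • (1 : Matrix (Fin n) (Fin n) ℂ)
          - ∑ t ∈ Finset.range m, z ^ (m - 1 - t) • B t with hD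
      have hDw : D *ᵥ w = 0 := by
        rw [hD]
        simp only [Matrix.sub_mulVec, Matrix.smul_mulVec, Matrix.one_mulVec, sum_mulVec']
        rw [← hweq]
        simp [Matrix.smul_mulVec]
      have hDdet : D.det = 0 := Matrix.exists_mulVec_eq_zero_iff.mp ⟨w, hwne, hDw⟩
      have hDnu : ¬ IsUnit D := by
        rw [Matrix.isUnit_iff_isUnit_det, hDdet]
        exact not_isUnit_zero
      obtain ⟨μ, hμ, heq⟩ := spec_of_poly A k m c z (by simp only [hD, hB] at hDnu; exact hDnu)
      have habs := hroot μ hμ z heq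
      rw [show (1 : NNReal) = ‖(1:ℂ)‖₊ from by simp]
      rw [← NNReal.coe_lt_coe]
      simpa using habs
    haveI : Nonempty (Fin m) := ⟨⟨0, by omega⟩⟩
    have htend0 := pow_mulVec_tendsto_zero_aux (compC m B) hspecC
      (fun sp : Fin m × Fin n => e (0 - (sp.1 : ℕ)) sp.2)
    refine ⟨xstar, ?_, hxstar⟩
    rw [tendsto_pi_nhds]
    intro p
    have hE0 : ∀ N : ℕ, x (N : ℤ) p
        = (fun sp : Fin m × Fin n => e ((N : ℤ) - (sp.1 : ℕ)) sp.2) (⟨0, by omega⟩, p)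
          + xstar p := by
      intro N
      simp only [he]
      simp
    have htendsp : Tendsto (fun N : ℕ =>
        (fun sp : Fin m × Fin n => e ((N : ℤ) - (sp.1 : ℕ)) sp.2) (⟨0, by omega⟩, p))
        atTop (nhds 0) := by
      have h1 : ∀ N : ℕ, (fun sp : Fin m × Fin n => e ((N : ℤ) - (sp.1 : ℕ)) sp.2) (⟨0, by omega⟩, p)
          = ((compC m B ^ N) *ᵥ (fun sp : Fin m × Fin n => e (0 - (sp.1 : ℕ)) sp.2))
              (⟨0, by omega⟩, p) := by
        intro N
        rw [← hEiter N]
      simp only [h1]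
      have := ((continuous_apply ((⟨0, by omega⟩ : Fin m), p)).tendsto 0).comp htend0
      simpa [Function.comp_def] using this
    have := htendsp.add_const (xstar p)
    rw [zero_add] at this
    refine Tendsto.congr ?_ this
    intro N
    rw [hE0 N]
end Companion3
end

section
/- Minimization over an affine Krylov slab: let A be an n×n complex matrix with positive definite Hermitian part H, y a vector, and x_n any vector with residual r_n = y - Ax_n. Then the minimum of ‖y - Ax‖₂ over x in the affine space x_n + span{r_n} is at most sqrt(1 - (λmin(H)/‖A‖₂)²) · ‖r_n‖₂. -/
open Matrix
open scoped ComplexOrder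

open scoped InnerProductSpace in
lemma rayleigh_aux {n : ℕ} {H : Matrix (Fin n) (Fin n) ℂ} (hH : H.IsHermitian)
    (x : EuclideanSpace ℂ (Fin n)) :
    (⨅ i, hH.eigenvalues i) * ‖x‖ ^ 2 ≤ Complex.re (⟪x, mulVecE H x⟫_ℂ) := by
  set c : ℝ := ⨅ i, hH.eigenvalues i with hc
  have key : H - (c : ℂ) • 1 =
      (hH.eigenvectorUnitary : Matrix (Fin n) (Fin n) ℂ) *
        diagonal (fun i => ((hH.eigenvalues i - c : ℝ) : ℂ)) *
        star (hH.eigenvectorUnitary : Matrix (Fin n) (Fin n) ℂ) := by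
    have hU : (hH.eigenvectorUnitary : Matrix (Fin n) (Fin n) ℂ) *
        star (hH.eigenvectorUnitary : Matrix (Fin n) (Fin n) ℂ) = 1 :=
      (Matrix.mem_unitaryGroup_iff).mp (hH.eigenvectorUnitary).2
    have hd : diagonal (fun i => ((hH.eigenvalues i - c : ℝ) : ℂ)) =
        diagonal (RCLike.ofReal ∘ hH.eigenvalues) - (c : ℂ) • 1 := by
      ext i j
      by_cases h : i = j <;>
        simp [h, Matrix.one_apply, Matrix.diagonal_apply, Complex.ofReal_sub]
    rw [hd, mul_sub, sub_mul, ← Unitary.conjStarAlgAut_apply (S := ℂ), ← hH.spectral_theorem]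
    congr 1
    rw [Matrix.mul_smul, Matrix.smul_mul, mul_one, hU]
  have hps : (H - (c : ℂ) • 1).PosSemidef := by
    rw [key]
    apply Matrix.PosSemidef.mul_mul_conjTranspose_same
    apply Matrix.PosSemidef.diagonal
    intro i
    have : c ≤ hH.eigenvalues i := ciInf_le (Finite.bddBelow_range _) i
    rw [Complex.le_def]
    constructor <;> simp [this]
  have h0 := hps.re_dotProduct_nonneg (x : Fin n → ℂ)
  have hexp : dotProduct (star (x : Fin n → ℂ)) ((H - (c : ℂ) • 1) *ᵥ x)
      = ⟪x, mulVecE H x⟫_ℂ - (c : ℂ) * ⟪x, x⟫_ℂ := by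
    rw [Matrix.sub_mulVec, dotProduct_sub, Matrix.smul_mulVec,
      Matrix.one_mulVec, dotProduct_smul]
    rw [EuclideanSpace.inner_eq_star_dotProduct, EuclideanSpace.inner_eq_star_dotProduct, dotProduct_comm _ (star _), dotProduct_comm _ (star _), smul_eq_mul]
    rfl
  rw [hexp] at h0
  have h0' : 0 ≤ Complex.re (⟪x, mulVecE H x⟫_ℂ - (c : ℂ) * ⟪x, x⟫_ℂ) := h0
  have hxx : Complex.re ((c : ℂ) * ⟪x, x⟫_ℂ) = c * ‖x‖ ^ 2 := by
    rw [Complex.re_ofReal_mul]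
    congr 1
    have := inner_self_eq_norm_sq (𝕜 := ℂ) x
    simpa using this
  rw [Complex.sub_re, hxx] at h0'
  linarith

open scoped InnerProductSpace in
theorem stmt13 {n : ℕ} (hn : 0 < n) (A : Matrix (Fin n) (Fin n) ℂ)
    (H : Matrix (Fin n) (Fin n) ℂ) (hHdef : H = (1 / 2 : ℂ) • (Aᴴ + A))
    (hH : H.PosDef) (y xn r : EuclideanSpace ℂ (Fin n))
    (hr : r = y - mulVecE A xn) :
    ∃ α : ℂ, ‖y - mulVecE A (xn + α • r)‖
      ≤ Real.sqrt (1 - ((⨅ i, hH.1.eigenvalues i) / opNorm A) ^ 2) * ‖r‖ := by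
  set T := Matrix.toEuclideanCLM (𝕜 := ℂ) A with hT
  have hTe : ∀ v : EuclideanSpace ℂ (Fin n), mulVecE A v = T v := fun _ => rfl
  have hres : ∀ α : ℂ, y - mulVecE A (xn + α • r) = r - α • mulVecE A r := by
    intro α
    rw [hTe, hTe, map_add, ContinuousLinearMap.map_smul, hr, hTe]
    abel
  set c : ℝ := ⨅ i, hH.1.eigenvalues i with hc
  haveI : Nonempty (Fin n) := ⟨⟨0, hn⟩⟩
  have hcpos : 0 < c := by
    obtain ⟨i₀, hi₀⟩ := Finite.exists_min hH.1.eigenvalues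
    have h1 : 0 < hH.1.eigenvalues i₀ := hH.eigenvalues_pos i₀
    have hle : hH.1.eigenvalues i₀ ≤ c := le_ciInf hi₀
    linarith
  by_cases hr0 : r = 0
  · refine ⟨0, ?_⟩
    rw [hres 0, hr0]
    simp
  have hrpos : 0 < ‖r‖ := norm_pos_iff.mpr hr0
  set w : EuclideanSpace ℂ (Fin n) := mulVecE A r with hw
  set d : ℂ := ⟪r, w⟫_ℂ with hd
  have hstar : star d = dotProduct (star (r : Fin n → ℂ)) (Aᴴ *ᵥ r) := by
    rw [hd, EuclideanSpace.inner_eq_star_dotProduct, dotProduct_comm (WithLp.ofLp w)]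
    show star (dotProduct (star (r : Fin n → ℂ)) (A *ᵥ r)) = _
    rw [Matrix.star_dotProduct, star_star, Matrix.star_mulVec, Matrix.dotProduct_mulVec]
  have hdotd : dotProduct (star (r : Fin n → ℂ)) (A *ᵥ r) = d := by
    rw [hd, EuclideanSpace.inner_eq_star_dotProduct, dotProduct_comm (WithLp.ofLp w)]; rfl
  have hreH : Complex.re (⟪r, mulVecE H r⟫_ℂ) = Complex.re d := by
    have hsplit : ⟪r, mulVecE H r⟫_ℂ = (1 / 2 : ℂ) * (star d + d) := by
      rw [EuclideanSpace.inner_eq_star_dotProduct, dotProduct_comm (WithLp.ofLp (mulVecE H r))]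
      show dotProduct (star (r : Fin n → ℂ)) (H *ᵥ r) = _
      rw [hHdef, Matrix.smul_mulVec, dotProduct_smul, Matrix.add_mulVec,
        dotProduct_add, hdotd, hstar]
      simp [smul_eq_mul]
    have h2 : (1 / 2 : ℂ) * (star d + d) = ((d.re : ℝ) : ℂ) := by
      rw [Complex.star_def, add_comm, Complex.add_conj]
      push_cast
      ring
    rw [hsplit, h2, Complex.ofReal_re]
  have hrayl : c * ‖r‖ ^ 2 ≤ Complex.re d := by
    rw [← hreH]; exact rayleigh_aux hH.1 r
  have hrepos : 0 < Complex.re d :=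
    lt_of_lt_of_le (by positivity) hrayl
  have hw0 : w ≠ 0 := by
    intro h
    rw [hd, h] at hrepos
    simp at hrepos
  have hwpos : 0 < ‖w‖ := norm_pos_iff.mpr hw0
  have hwle : ‖w‖ ≤ opNorm A * ‖r‖ := by
    rw [hw, hTe]
    exact (T.le_opNorm r)
  have hApos : 0 < opNorm A := by
    by_contra h
    push_neg at h
    nlinarith
  have hdnorm : c * ‖r‖ ^ 2 ≤ ‖d‖ := le_trans hrayl (Complex.re_le_norm d)
  refine ⟨(starRingEnd ℂ) d / (‖w‖ ^ 2 : ℝ), ?_⟩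
  rw [hres]
  set α : ℂ := (starRingEnd ℂ) d / (‖w‖ ^ 2 : ℝ) with hα
  have hw2 : ((‖w‖ ^ 2 : ℝ) : ℂ) ≠ 0 := by
    simp only [ne_eq, Complex.ofReal_eq_zero]
    positivity
  have hsq : ‖r - α • w‖ ^ 2 = ‖r‖ ^ 2 - ‖d‖ ^ 2 / ‖w‖ ^ 2 := by
    rw [norm_sub_sq (𝕜 := ℂ)]
    have h1 : (⟪r, α • w⟫_ℂ) = α * d := inner_smul_right r w α
    have h2 : α * d = ((‖d‖ ^ 2 / ‖w‖ ^ 2 : ℝ) : ℂ) := by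
      rw [hα, div_mul_eq_mul_div, mul_comm ((starRingEnd ℂ) d) d, Complex.mul_conj,
        Complex.normSq_eq_norm_sq]
      push_cast
      ring
    have h3 : ‖α • w‖ ^ 2 = ‖d‖ ^ 2 / ‖w‖ ^ 2 := by
      rw [norm_smul, mul_pow, hα, norm_div, RCLike.norm_conj, Complex.norm_real,
        Real.norm_eq_abs, abs_of_nonneg (sq_nonneg ‖w‖)]
      field_simp
    rw [h1, h2, h3]
    simp only [RCLike.re_to_complex, Complex.ofReal_re]
    ring
  set t : ℝ := (c / opNorm A) ^ 2 with ht
  have hlow : t * ‖r‖ ^ 2 ≤ ‖d‖ ^ 2 / ‖w‖ ^ 2 := by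
    have h1 : (c * ‖r‖ ^ 2) ^ 2 / (opNorm A * ‖r‖) ^ 2 ≤ ‖d‖ ^ 2 / ‖w‖ ^ 2 := by
      apply div_le_div₀ (sq_nonneg ‖d‖)
      · exact pow_le_pow_left₀ (by positivity) hdnorm 2
      · positivity
      · exact pow_le_pow_left₀ (le_of_lt hwpos) hwle 2
    calc t * ‖r‖ ^ 2 = (c * ‖r‖ ^ 2) ^ 2 / (opNorm A * ‖r‖) ^ 2 := by
          rw [ht]
          field_simp
      _ ≤ ‖d‖ ^ 2 / ‖w‖ ^ 2 := h1
  have hkey : ‖r - α • w‖ ^ 2 ≤ (1 - t) * ‖r‖ ^ 2 := by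
    rw [hsq]
    have : (1 - t) * ‖r‖ ^ 2 = ‖r‖ ^ 2 - t * ‖r‖ ^ 2 := by ring
    rw [this]
    linarith
  have hfac : 0 ≤ 1 - t := by
    have h1 : (0:ℝ) ≤ ‖r - α • w‖ ^ 2 := sq_nonneg _
    have h2 : (0:ℝ) < ‖r‖ ^ 2 := by positivity
    nlinarith
  calc ‖r - α • w‖ = Real.sqrt (‖r - α • w‖ ^ 2) :=
        (Real.sqrt_sq (norm_nonneg _)).symm
    _ ≤ Real.sqrt ((1 - t) * ‖r‖ ^ 2) := Real.sqrt_le_sqrt hkey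
    _ = Real.sqrt (1 - t) * ‖r‖ := by
        rw [Real.sqrt_mul hfac, Real.sqrt_sq (norm_nonneg _)]
end

section
/- Error-minimizing variant: under the same hypotheses (Hermitian part H of A positive definite), for any x_n with error e_n = A⁻¹y - x_n, there exists a scalar α such that x_{n+1} = x_n + α r_n satisfies ‖e_{n+1}‖₂ ≤ sqrt(1 - (λmin(H)/‖A‖₂)²) · ‖e_n‖₂, using that e_{n+1} = (I - αA)e_n. -/
open Matrix
open scoped ComplexOrder ComplexInnerProductSpace

lemma mulVecE_eq_clm {n : ℕ} (A : Matrix (Fin n) (Fin n) ℂ) (v : EuclideanSpace ℂ (Fin n)) :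
    mulVecE A v = Matrix.toEuclideanCLM (𝕜 := ℂ) A v := rfl

lemma clm_smul_one {n : ℕ} (c : ℂ) :
    Matrix.toEuclideanCLM (𝕜 := ℂ) (c • (1 : Matrix (Fin n) (Fin n) ℂ)) =
      c • (1 : EuclideanSpace ℂ (Fin n) →L[ℂ] EuclideanSpace ℂ (Fin n)) := by
  rw [← Algebra.algebraMap_eq_smul_one, ← Algebra.algebraMap_eq_smul_one]
  exact AlgEquivClass.commutes _ _

lemma clm_smul {n : ℕ} (c : ℂ) (A : Matrix (Fin n) (Fin n) ℂ) :
    Matrix.toEuclideanCLM (𝕜 := ℂ) (c • A) =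
      c • Matrix.toEuclideanCLM (𝕜 := ℂ) A := by
  rw [show c • A = (c • (1 : Matrix (Fin n) (Fin n) ℂ)) * A by
    rw [smul_mul_assoc, one_mul], _root_.map_mul, clm_smul_one, smul_mul_assoc, one_mul]

lemma sub_smul_one_posSemidef {n : ℕ} (hn : 0 < n) (H : Matrix (Fin n) (Fin n) ℂ)
    (hH : H.IsHermitian) :
    Matrix.PosSemidef (H - ((⨅ i, hH.eigenvalues i : ℝ) : ℂ) • 1) := by
  haveI : Nonempty (Fin n) := ⟨⟨0, hn⟩⟩
  set μ := ⨅ i, hH.eigenvalues i with hμ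
  have h1 : H - (μ : ℂ) • 1 =
      (hH.eigenvectorUnitary : Matrix (Fin n) (Fin n) ℂ) *
        Matrix.diagonal (fun i => ((hH.eigenvalues i - μ : ℝ) : ℂ)) *
        (hH.eigenvectorUnitary : Matrix (Fin n) (Fin n) ℂ)ᴴ := by
    have hUU : (hH.eigenvectorUnitary : Matrix (Fin n) (Fin n) ℂ) *
        star (hH.eigenvectorUnitary : Matrix (Fin n) (Fin n) ℂ) = 1 :=
      (Matrix.mem_unitaryGroup_iff).mp hH.eigenvectorUnitary.2
    conv_lhs => rw [hH.spectral_theorem]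
    rw [← Matrix.star_eq_conjTranspose]
    have hd : Matrix.diagonal (fun i => ((hH.eigenvalues i - μ : ℝ) : ℂ)) =
        Matrix.diagonal (RCLike.ofReal ∘ hH.eigenvalues) - (μ : ℂ) • 1 := by
      ext i j
      by_cases h : i = j <;>
        simp [h, Matrix.diagonal_apply, Matrix.one_apply, Complex.ofReal_sub, sub_eq_add_neg]
    rw [hd, Matrix.mul_sub, Matrix.sub_mul]
    congr 1
    rw [Matrix.mul_smul, Matrix.mul_one, Matrix.smul_mul, hUU]
  rw [h1]
  exact (Matrix.posSemidef_diagonal_iff.mpr fun i => by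
    have : μ ≤ hH.eigenvalues i := ciInf_le (Finite.bddBelow_range _) i
    simpa using Complex.zero_le_real.mpr (sub_nonneg.mpr this)).mul_mul_conjTranspose_same _

lemma aux_expand (a b Q : ℝ) (hb : b ≠ 0) :
    a - 2 * (Q / b ^ 2 * Q) + (Q / b ^ 2) ^ 2 * b ^ 2 = a - Q ^ 2 / b ^ 2 := by
  field_simp
  ring

lemma aux_div (l Nn E : ℝ) (hN : Nn ≠ 0) (hE : E ≠ 0) :
    (l / Nn) ^ 2 * E ^ 2 = (l * E ^ 2) ^ 2 / (Nn * E) ^ 2 := by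
  field_simp

lemma rayleigh_lower {n : ℕ} (hn : 0 < n) (H : Matrix (Fin n) (Fin n) ℂ)
    (hH : H.IsHermitian) (v : EuclideanSpace ℂ (Fin n)) :
    (⨅ i, hH.eigenvalues i) * ‖v‖ ^ 2 ≤ RCLike.re (K := ℂ) ⟪v, mulVecE H v⟫ := by
  set μ := ⨅ i, hH.eigenvalues i with hμ
  have h0 : 0 ≤ RCLike.re (K := ℂ) ⟪v, mulVecE (H - (μ : ℂ) • 1) v⟫ := by
    rw [mulVecE, EuclideanSpace.inner_eq_star_dotProduct, dotProduct_comm]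
    exact (sub_smul_one_posSemidef hn H hH).re_dotProduct_nonneg _
  have h1 : mulVecE (H - (μ : ℂ) • 1) v = mulVecE H v - (μ : ℂ) • v := by
    simp only [mulVecE_eq_clm]
    rw [map_sub, clm_smul_one]
    rfl
  rw [h1, inner_sub_right, inner_smul_right, map_sub] at h0
  have h2 : RCLike.re (K := ℂ) ((μ : ℂ) * ⟪v, v⟫) = μ * ‖v‖ ^ 2 := by
    rw [show ((μ : ℂ)) = RCLike.ofReal μ from rfl, RCLike.re_ofReal_mul, inner_self_eq_norm_sq]
  rw [h2] at h0
  linarith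

set_option maxHeartbeats 1000000 in
theorem stmt14 {n : ℕ} (hn : 0 < n) (A : Matrix (Fin n) (Fin n) ℂ)
    (hA : IsUnit A)
    (H : Matrix (Fin n) (Fin n) ℂ) (hHdef : H = (1 / 2 : ℂ) • (Aᴴ + A))
    (hH : H.PosDef) (y x r e : EuclideanSpace ℂ (Fin n))
    (hr : r = y - mulVecE A x) (he : e = mulVecE A⁻¹ y - x) :
    (∀ α : ℂ, mulVecE A⁻¹ y - (x + α • r) = mulVecE (1 - α • A) e)
    ∧ ∃ α : ℂ, ‖mulVecE A⁻¹ y - (x + α • r)‖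
        ≤ Real.sqrt (1 - ((⨅ i, hH.1.eigenvalues i) / opNorm A) ^ 2) * ‖e‖ := by
  haveI : Nonempty (Fin n) := ⟨⟨0, hn⟩⟩
  have hAinv : A * A⁻¹ = 1 := Matrix.mul_nonsing_inv A ((Matrix.isUnit_iff_isUnit_det A).mp hA)
  have hTS : ∀ w : EuclideanSpace ℂ (Fin n),
      Matrix.toEuclideanCLM (𝕜 := ℂ) A (Matrix.toEuclideanCLM (𝕜 := ℂ) A⁻¹ w) = w := by
    intro w
    have h : Matrix.toEuclideanCLM (𝕜 := ℂ) A * Matrix.toEuclideanCLM (𝕜 := ℂ) A⁻¹ = 1 := by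
      rw [← _root_.map_mul, hAinv, _root_.map_one]
    calc Matrix.toEuclideanCLM (𝕜 := ℂ) A (Matrix.toEuclideanCLM (𝕜 := ℂ) A⁻¹ w)
        = (Matrix.toEuclideanCLM (𝕜 := ℂ) A * Matrix.toEuclideanCLM (𝕜 := ℂ) A⁻¹) w := rfl
      _ = w := by rw [h]; rfl
  have part1 : ∀ α : ℂ, mulVecE A⁻¹ y - (x + α • r) = mulVecE (1 - α • A) e := by
    intro α
    subst hr he
    simp only [mulVecE_eq_clm]
    have hmat : Matrix.toEuclideanCLM (𝕜 := ℂ) (1 - α • A)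
        = 1 - α • Matrix.toEuclideanCLM (𝕜 := ℂ) A := by
      rw [_root_.map_sub, _root_.map_one, clm_smul]
    rw [hmat, ContinuousLinearMap.sub_apply, ContinuousLinearMap.one_apply,
      ContinuousLinearMap.smul_apply, _root_.map_sub, hTS]
    simp only [smul_sub]
    abel
  refine ⟨part1, ?_⟩
  by_cases hezero : e = 0
  · refine ⟨0, ?_⟩
    rw [part1 0, hezero]
    simp only [mulVecE_eq_clm, map_zero, norm_zero]
    positivity
  -- nontrivial case
  set lam := ⨅ i, hH.1.eigenvalues i with hlam
  set N := opNorm A with hN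
  set v := mulVecE A e with hv
  set q := RCLike.re (K := ℂ) ⟪e, v⟫ with hqdef
  have he2 : 0 < ‖e‖ := norm_pos_iff.mpr hezero
  -- lam > 0
  have hlampos : 0 < lam := by
    obtain ⟨i, hi⟩ := exists_eq_ciInf_of_finite (f := hH.1.eigenvalues)
    rw [hlam, ← hi]
    exact hH.eigenvalues_pos i
  -- q = re ⟪e, H e⟫
  have hadj : ⟪e, mulVecE Aᴴ e⟫ = ⟪(v : EuclideanSpace ℂ (Fin n)), e⟫ := by
    rw [hv, mulVecE_eq_clm, mulVecE_eq_clm, ← Matrix.star_eq_conjTranspose, map_star,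
      ContinuousLinearMap.star_eq_adjoint, ContinuousLinearMap.adjoint_inner_right]
  have hHe : mulVecE H e = (1 / 2 : ℂ) • (mulVecE Aᴴ e + mulVecE A e) := by
    simp only [mulVecE_eq_clm, hHdef]
    rw [clm_smul, map_add]
    rfl
  have hqH : RCLike.re (K := ℂ) ⟪e, mulVecE H e⟫ = q := by
    rw [hHe, inner_smul_right, inner_add_right, hadj]
    have h3 : (⟪(v : EuclideanSpace ℂ (Fin n)), e⟫ : ℂ) = (starRingEnd ℂ) ⟪e, v⟫ :=
      (inner_conj_symm _ _).symm
    rw [h3, hqdef]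
    set z : ℂ := ⟪e, (v : EuclideanSpace ℂ (Fin n))⟫ with hz
    show ((1 / 2 : ℂ) * ((starRingEnd ℂ) z + (z : ℂ))).re = z.re
    simp [Complex.mul_re, Complex.add_re, Complex.add_im]
    ring
  have hq : lam * ‖e‖ ^ 2 ≤ q := by
    rw [← hqH]
    exact rayleigh_lower hn H hH.1 e
  have hqpos : 0 < q := lt_of_lt_of_le (by positivity) hq
  have hvnorm : ‖v‖ ≤ N * ‖e‖ := by
    rw [hv, mulVecE_eq_clm, hN, opNorm]
    exact (Matrix.toEuclideanCLM (𝕜 := ℂ) A).le_opNorm e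
  have hvpos : 0 < ‖v‖ := by
    rcases eq_or_lt_of_le (norm_nonneg v) with h | h
    · exfalso
      have : v = 0 := by rwa [eq_comm, norm_eq_zero] at h
      rw [hqdef, this, inner_zero_right] at hqpos
      simp at hqpos
    · exact h
  have hNpos : 0 < N := by
    nlinarith
  -- choose α
  have hqe : RCLike.re (K := ℂ) ⟪e, (v : EuclideanSpace ℂ (Fin n))⟫ = q := hqdef.symm
  set c : ℝ := q / ‖v‖ ^ 2 with hc
  clear_value c
  clear hqdef
  clear_value lam N v q
  refine ⟨(c : ℂ), ?_⟩
  rw [part1 _]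
  have hvec : mulVecE (1 - (c : ℂ) • A) e = e - (c : ℂ) • v := by
    simp only [mulVecE_eq_clm, hv]
    have hmat2 : Matrix.toEuclideanCLM (𝕜 := ℂ) (1 - (c : ℂ) • A)
        = 1 - (c : ℂ) • Matrix.toEuclideanCLM (𝕜 := ℂ) A := by
      rw [_root_.map_sub, _root_.map_one, clm_smul]
    rw [hmat2]
    rfl
  rw [hvec]
  -- norm squared computation
  have hre : RCLike.re (K := ℂ) ⟪e, (c : ℂ) • v⟫ = c * q := by
    rw [inner_smul_right, show ((c : ℂ)) = RCLike.ofReal c from rfl, RCLike.re_ofReal_mul, hqe]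
  have hns : ‖(c : ℂ) • v‖ ^ 2 = c ^ 2 * ‖v‖ ^ 2 := by
    rw [norm_smul, Complex.norm_real, Real.norm_eq_abs, mul_pow, sq_abs]
  have hexp : ‖e - (c : ℂ) • v‖ ^ 2 = ‖e‖ ^ 2 - q ^ 2 / ‖v‖ ^ 2 := by
    rw [@norm_sub_sq ℂ, hre, hns, hc]
    exact aux_expand _ _ _ (ne_of_gt hvpos)
  have hkey : (lam / N) ^ 2 * ‖e‖ ^ 2 ≤ q ^ 2 / ‖v‖ ^ 2 := by
    rw [aux_div lam N ‖e‖ (ne_of_gt hNpos) (ne_of_gt he2)]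
    apply div_le_div₀ (sq_nonneg q)
    · exact pow_le_pow_left₀ (by positivity) hq 2
    · positivity
    · exact pow_le_pow_left₀ (norm_nonneg v) hvnorm 2
  have hsq : ‖e - (c : ℂ) • v‖ ^ 2 ≤ (1 - (lam / N) ^ 2) * ‖e‖ ^ 2 := by
    rw [hexp]; linarith [hkey]
  have hx1 : 0 ≤ 1 - (lam / N) ^ 2 := by
    have h0 : 0 ≤ ‖e - (c : ℂ) • v‖ ^ 2 := sq_nonneg _
    exact (mul_nonneg_iff_of_pos_right (pow_pos he2 2)).mp (le_trans h0 hsq)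
  calc ‖e - (c : ℂ) • v‖ = Real.sqrt (‖e - (c : ℂ) • v‖ ^ 2) := by
        rw [Real.sqrt_sq (norm_nonneg _)]
    _ ≤ Real.sqrt ((1 - (lam / N) ^ 2) * ‖e‖ ^ 2) := Real.sqrt_le_sqrt hsq
    _ = Real.sqrt (1 - (lam / N) ^ 2) * ‖e‖ := by
        rw [Real.sqrt_mul hx1, Real.sqrt_sq (norm_nonneg _)]
end
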